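/- arXiv:2507.20902 — 5 statements merged into one kernel-verified Lean document; each statement's English description precedes it below -/
import Mathlib

section
/- With C̄ = (-1)^{q(C)} i_C as above, for all C₁, C₂ ∈ V the relation C̄₁₊₂ = (-1)^{Q(C₁,C₂)}((-1)^{q(C₂)} C̄₁ + (-1)^{q(C₁)} C̄₂ - 2 C̄₁ C̄₂) holds in the ring of functions V → ℤ/8, where C̄₁₊₂ denotes the function associated to C₁ + C₂. -/
/-- With `C̄ = (-1)^{q C} • i_C`, for all `C₁ C₂ ∈ V` one has the relation
`(C₁+C₂)‾ = (-1)^{Q C₁ C₂} ((-1)^{q C₂} C̄₁ + (-1)^{q C₁} C̄₂ - 2 C̄₁ C̄₂)` pointwise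
in the ring of functions `V → ℤ/8`. -/
theorem stmt2 (V : Type*) [AddCommGroup V] [Module (ZMod 2) V]
    [FiniteDimensional (ZMod 2) V]
    (Q : V →ₗ[ZMod 2] V →ₗ[ZMod 2] ZMod 2)
    (hAlt : ∀ x, Q x x = 0)
    (i : V → V → ZMod 8)
    (hi : ∀ z y, i z y = if Q z y = 1 then 1 else 0)
    (q : V → ZMod 2)
    (hq : ∀ x y, q (x + y) = q x + q y + Q x y)
    (sgn : ZMod 2 → ZMod 8)
    (hsgn : ∀ t, sgn t = if t = 0 then 1 else -1)
    (cbar : V → V → ZMod 8)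
    (hcbar : ∀ C y, cbar C y = sgn (q C) * i C y) :
    ∀ C₁ C₂ y : V, cbar (C₁ + C₂) y =
      sgn (Q C₁ C₂) * (sgn (q C₂) * cbar C₁ y + sgn (q C₁) * cbar C₂ y
        - 2 * (cbar C₁ y * cbar C₂ y)) := by
  intro C₁ C₂ y
  have hQ : Q (C₁ + C₂) y = Q C₁ y + Q C₂ y := by simp
  simp only [hcbar, hi, hsgn, hq, hQ]
  generalize Q C₁ y = a
  generalize Q C₂ y = b
  generalize q C₁ = c
  generalize q C₂ = d
  generalize Q C₁ C₂ = e
  revert a b c d e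
  decide
end

section
/- Let {X_i}_{i=1}^{2g} be a symplectic basis of (V, Q) over 𝔽₂ (Q(X_{2i-1},X_{2j}) = δ_{ij}, Q(X_{2i-1},X_{2j-1}) = Q(X_{2i},X_{2j}) = 0). If a ℤ/8-linear combination Σ_i a_i X̄_i + Σ_{i<j} b_{ij} (2 X̄_i X̄_j) + Σ_{i<j<k} c_{ijk} (4 X̄_i X̄_j X̄_k) equals the zero function V → ℤ/8, then a_i = 0, 2 b_{ij} = 0, and 4 c_{ijk} = 0 for all indices. In particular the functions X̄_i, 2X̄_iX̄_j (i<j), 4X̄_iX̄_jX̄_k (i<j<k) span a ℤ/8-submodule of Map(V, ℤ/8) isomorphic to (ℤ/8)^{2g} ⊕ (ℤ/4)^{C(2g,2)} ⊕ (ℤ/2)^{C(2g,3)}. -/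
def lift2 (t : ZMod 4) : ZMod 8 := 2 * (t.val : ZMod 8)
def lift3 (t : ZMod 2) : ZMod 8 := 4 * (t.val : ZMod 8)

lemma lift2_add : ∀ s t : ZMod 4, lift2 (s + t) = lift2 s + lift2 t := by decide
lemma lift3_add : ∀ s t : ZMod 2, lift3 (s + t) = lift3 s + lift3 t := by decide
lemma lift2_smul : ∀ (r : ZMod 8) (t : ZMod 4),
    r * lift2 t = lift2 ((r.val : ZMod 4) * t) := by decide
lemma lift3_smul : ∀ (r : ZMod 8) (t : ZMod 2),
    r * lift3 t = lift3 ((r.val : ZMod 2) * t) := by decide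
lemma zm4_eq_zero : ∀ t : ZMod 4, 2 * ((t.val : ℕ) : ZMod 8) = 0 → t = 0 := by decide
lemma zm2_eq_zero : ∀ t : ZMod 2, 4 * ((t.val : ℕ) : ZMod 8) = 0 → t = 0 := by decide
lemma lift2_zero : lift2 0 = 0 := by decide
lemma lift2_one : lift2 1 = 2 := by decide
lemma lift3_zero : lift3 0 = 0 := by decide
lemma lift3_one : lift3 1 = 4 := by decide

lemma card2 {m : ℕ} {i j : Fin m} (h : i < j) : ({i, j} : Finset (Fin m)).card = 2 :=
  Finset.card_pair h.ne

lemma card3 {m : ℕ} {i j k : Fin m} (h1 : i < j) (h2 : j < k) :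
    ({i, j, k} : Finset (Fin m)).card = 3 := by
  rw [Finset.card_insert_of_notMem (by
    simp [Finset.mem_insert, Finset.mem_singleton, h1.ne, (h1.trans h2).ne]),
    Finset.card_pair h2.ne]

lemma prod3 {m : ℕ} {i j k : Fin m} (h1 : i < j) (h2 : j < k) (F : Fin m → ZMod 8) :
    ∏ x ∈ ({i, j, k} : Finset (Fin m)), F x = F i * (F j * F k) := by
  rw [Finset.prod_insert (by
    simp [Finset.mem_insert, Finset.mem_singleton, h1.ne, (h1.trans h2).ne]),
    Finset.prod_pair h2.ne]

lemma exists_pair {m : ℕ} (s : Finset (Fin m)) (h : s.card = 2) :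
    ∃ i j : Fin m, i < j ∧ s = {i, j} := by
  obtain ⟨x, y, hxy, rfl⟩ := Finset.card_eq_two.mp h
  rcases lt_or_gt_of_ne hxy with h' | h'
  · exact ⟨x, y, h', rfl⟩
  · exact ⟨y, x, h', Finset.pair_comm x y⟩

lemma exists_triple {m : ℕ} (s : Finset (Fin m)) (h : s.card = 3) :
    ∃ i j k : Fin m, i < j ∧ j < k ∧ s = {i, j, k} := by
  obtain ⟨x, y, z, hxy, hxz, hyz, rfl⟩ := Finset.card_eq_three.mp h
  have hperm : ∀ a b c : Fin m, ({a, b, c} : Finset (Fin m)) = {b, a, c} := by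
    intro a b c; ext t; simp [Finset.mem_insert]; tauto
  have hperm2 : ∀ a b c : Fin m, ({a, b, c} : Finset (Fin m)) = {a, c, b} := by
    intro a b c; ext t; simp [Finset.mem_insert]; tauto
  rcases lt_or_gt_of_ne hxy with h1 | h1 <;> rcases lt_or_gt_of_ne hxz with h2 | h2 <;>
    rcases lt_or_gt_of_ne hyz with h3 | h3
  · exact ⟨x, y, z, h1, h3, rfl⟩
  · exact ⟨x, z, y, h2, h3, hperm2 x y z⟩
  · exact absurd h1 (not_lt_of_gt (h3.trans h2))
  · exact ⟨z, x, y, h2, h1, by rw [hperm2 x y z, hperm x z y]⟩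
  · exact ⟨y, x, z, h1, h2, hperm x y z⟩
  · exact absurd h2 (not_lt_of_gt (h3.trans h1))
  · exact ⟨y, z, x, h3, h2, by rw [hperm x y z, hperm2 y x z]⟩
  · exact ⟨z, y, x, h3, h1, by rw [hperm2 x y z, hperm x z y, hperm2 z x y]⟩

lemma pair_inj {m : ℕ} {i j i' j' : Fin m} (h : i < j) (h' : i' < j')
    (he : ({i, j} : Finset (Fin m)) = {i', j'}) : i = i' ∧ j = j' := by
  have h1 := Finset.ext_iff.mp he i
  have h2 := Finset.ext_iff.mp he j
  have h3 := (Finset.ext_iff.mp he i').symm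
  have h4 := (Finset.ext_iff.mp he j').symm
  simp only [Finset.mem_insert, Finset.mem_singleton] at h1 h2 h3 h4
  simp only [Fin.ext_iff, Fin.lt_def] at *
  simp only [true_or, or_true, true_iff, iff_true] at h1 h2 h3 h4
  omega

lemma triple_inj {m : ℕ} {i j k i' j' k' : Fin m} (h1 : i < j) (h2 : j < k)
    (h1' : i' < j') (h2' : j' < k')
    (he : ({i, j, k} : Finset (Fin m)) = {i', j', k'}) : i = i' ∧ j = j' ∧ k = k' := by
  have e1 := Finset.ext_iff.mp he i
  have e2 := Finset.ext_iff.mp he j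
  have e3 := Finset.ext_iff.mp he k
  have e4 := (Finset.ext_iff.mp he i').symm
  have e5 := (Finset.ext_iff.mp he j').symm
  have e6 := (Finset.ext_iff.mp he k').symm
  simp only [Finset.mem_insert, Finset.mem_singleton] at e1 e2 e3 e4 e5 e6
  simp only [Fin.ext_iff, Fin.lt_def] at *
  simp only [true_or, or_true, true_iff, iff_true] at e1 e2 e3 e4 e5 e6
  omega

lemma reindex2 {m : ℕ} (f : Finset (Fin m) → ZMod 8) (F : Fin m → ZMod 8) :
    (∑ s : {s : Finset (Fin m) // s.card = 2}, f s.1 * ∏ x ∈ s.1, F x)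
    = ∑ i', ∑ j', if i' < j' then f {i', j'} * (F i' * F j') else 0 := by
  rw [← Finset.sum_product', ← Finset.sum_filter]
  refine (Finset.sum_bij
    (fun p hp => (⟨{p.1, p.2}, card2 (Finset.mem_filter.mp hp).2⟩ :
      {s : Finset (Fin m) // s.card = 2})) (fun _ _ => Finset.mem_univ _) ?_ ?_ ?_).symm
  · intro p1 hp1 p2 hp2 heq
    have h1 := (Finset.mem_filter.mp hp1).2
    have h2 := (Finset.mem_filter.mp hp2).2
    obtain ⟨ha, hb⟩ := pair_inj h1 h2 (congrArg Subtype.val heq)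
    exact Prod.ext ha hb
  · intro s _
    obtain ⟨i, j, hij, hs⟩ := exists_pair s.1 s.2
    exact ⟨(i, j), Finset.mem_filter.mpr
      ⟨Finset.mem_product.mpr ⟨Finset.mem_univ _, Finset.mem_univ _⟩, hij⟩,
      Subtype.ext hs.symm⟩
  · intro p hp
    rw [Finset.prod_pair (Finset.mem_filter.mp hp).2.ne]

lemma reindex3 {m : ℕ} (f : Finset (Fin m) → ZMod 8) (F : Fin m → ZMod 8) :
    (∑ s : {s : Finset (Fin m) // s.card = 3}, f s.1 * ∏ x ∈ s.1, F x)
    = ∑ i', ∑ j', ∑ k', if i' < j' ∧ j' < k' then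
        f {i', j', k'} * (F i' * (F j' * F k')) else 0 := by
  rw [← Finset.sum_product', ← Finset.sum_product', ← Finset.sum_filter]
  refine (Finset.sum_bij
    (fun p hp => (⟨{p.1.1, p.1.2, p.2},
      card3 (Finset.mem_filter.mp hp).2.1 (Finset.mem_filter.mp hp).2.2⟩ :
      {s : Finset (Fin m) // s.card = 3})) (fun _ _ => Finset.mem_univ _) ?_ ?_ ?_).symm
  · intro p1 hp1 p2 hp2 heq
    have h1 := (Finset.mem_filter.mp hp1).2
    have h2 := (Finset.mem_filter.mp hp2).2
    obtain ⟨ha, hb, hc⟩ := triple_inj h1.1 h1.2 h2.1 h2.2 (congrArg Subtype.val heq)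
    exact Prod.ext (Prod.ext ha hb) hc
  · intro s _
    obtain ⟨i, j, k, hij, hjk, hs⟩ := exists_triple s.1 s.2
    exact ⟨((i, j), k), Finset.mem_filter.mpr
      ⟨Finset.mem_product.mpr ⟨Finset.mem_product.mpr ⟨Finset.mem_univ _, Finset.mem_univ _⟩,
        Finset.mem_univ _⟩, hij, hjk⟩,
      Subtype.ext hs.symm⟩
  · intro p hp
    rw [prod3 (Finset.mem_filter.mp hp).2.1 (Finset.mem_filter.mp hp).2.2]


def pf {g : ℕ} (s : Fin (2*g)) : Fin (2*g) :=
  ⟨if s.val % 2 = 0 then s.val + 1 else s.val - 1, by have := s.2; split_ifs <;> omega⟩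

section Aux
variable {g : ℕ} {V : Type*} [AddCommGroup V] [Module (ZMod 2) V]
  (Q : V →ₗ[ZMod 2] V →ₗ[ZMod 2] ZMod 2)
  (X : Module.Basis (Fin (2 * g)) (ZMod 2) V)
  (hX : ∀ i j : Fin (2 * g),
    Q (X i) (X j) = if (i.val / 2 = j.val / 2 ∧ i ≠ j) then 1 else 0)
  (ii : V → V → ZMod 8)
  (hi : ∀ z y, ii z y = if Q z y = 1 then 1 else 0)
  (q : V → ZMod 2)
  (sgn : ZMod 2 → ZMod 8)
  (hsgn : ∀ t, sgn t = if t = 0 then 1 else -1)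
  (cbar : V → V → ZMod 8)
  (hcbar : ∀ C y, cbar C y = sgn (q C) * ii C y)

include hX in
lemma Q_pf (m s : Fin (2*g)) : Q (X m) (X (pf s)) = if m = s then 1 else 0 := by
  rw [hX]
  have hv : (pf s).val = if s.val % 2 = 0 then s.val + 1 else s.val - 1 := rfl
  have h1 := s.2
  have h2 := m.2
  simp only [ne_eq, Fin.ext_iff]
  by_cases h : m.val = s.val
  · rw [if_pos ⟨by split at hv <;> omega, by split at hv <;> omega⟩, if_pos h]
  · rw [if_neg, if_neg h]
    rintro ⟨h3, h4⟩
    split at hv <;> omega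

include hX hi hcbar in
lemma evalS (m : Fin (2*g)) (S : Finset (Fin (2*g))) :
    cbar (X m) (∑ s ∈ S, X (pf s)) = if m ∈ S then sgn (q (X m)) else 0 := by
  rw [hcbar, hi]
  have hQ : Q (X m) (∑ s ∈ S, X (pf s)) = if m ∈ S then 1 else 0 := by
    rw [map_sum]
    simp only [Q_pf Q X hX]
    exact Finset.sum_ite_eq S m (fun _ => 1)
  rw [hQ]
  by_cases h : m ∈ S <;> simp [h]

include hX hi hsgn hcbar in
lemma part1 (a : Fin (2 * g) → ZMod 8) (b : Fin (2 * g) → Fin (2 * g) → ZMod 8)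
    (c : Fin (2 * g) → Fin (2 * g) → Fin (2 * g) → ZMod 8)
    (H : ∀ y : V,
      (∑ i', a i' * cbar (X i') y)
      + (∑ i', ∑ j', if i' < j' then
          b i' j' * (2 * (cbar (X i') y * cbar (X j') y)) else 0)
      + (∑ i', ∑ j', ∑ k', if i' < j' ∧ j' < k' then
          c i' j' k' * (4 * (cbar (X i') y * (cbar (X j') y * cbar (X k') y))) else 0)
      = 0) :
    (∀ i', a i' = 0) ∧ (∀ i' j', i' < j' → 2 * b i' j' = 0) ∧
      (∀ i' j' k', i' < j' → j' < k' → 4 * c i' j' k' = 0) := by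
  set ε : Fin (2*g) → ZMod 8 := fun m => sgn (q (X m)) with hε_def
  have hε : ∀ m, ε m * ε m = 1 := by
    intro m; simp only [hε_def, hsgn]; split_ifs <;> decide
  have hES := evalS Q X hX ii hi q sgn cbar hcbar
  -- Step 1 : a = 0
  have ha : ∀ i0, a i0 = 0 := by
    intro i0
    set y := ∑ s ∈ ({i0} : Finset (Fin (2*g))), X (pf s) with hy
    have hf : ∀ m, cbar (X m) y = if m = i0 then ε m else 0 := by
      intro m; rw [hy, hES m]; simp [hε_def]
    have e1 : (∑ m, a m * cbar (X m) y) = a i0 * ε i0 := by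
      rw [Finset.sum_eq_single i0]
      · rw [hf i0, if_pos rfl]
      · intro m _ hm; rw [hf m, if_neg hm, mul_zero]
      · intro h; exact absurd (Finset.mem_univ i0) h
    have e2 : (∑ i', ∑ j', if i' < j' then
        b i' j' * (2 * (cbar (X i') y * cbar (X j') y)) else 0) = 0 := by
      refine Finset.sum_eq_zero fun i' _ => Finset.sum_eq_zero fun j' _ => ?_
      split_ifs with hlt
      · rcases eq_or_ne i' i0 with rfl | h1
        · have hz : cbar (X j') y = 0 := by
            rw [hf j', if_neg]; rintro rfl; exact absurd hlt (lt_irrefl _)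
          rw [hz]; ring
        · rw [hf i', if_neg h1]; ring
      · rfl
    have e3 : (∑ i', ∑ j', ∑ k', if i' < j' ∧ j' < k' then
        c i' j' k' * (4 * (cbar (X i') y * (cbar (X j') y * cbar (X k') y))) else 0) = 0 := by
      refine Finset.sum_eq_zero fun i' _ => Finset.sum_eq_zero fun j' _ =>
        Finset.sum_eq_zero fun k' _ => ?_
      split_ifs with hlt
      · rcases eq_or_ne i' i0 with rfl | h1
        · have hz : cbar (X j') y = 0 := by
            rw [hf j', if_neg]; rintro rfl; exact absurd hlt.1 (lt_irrefl _)
          rw [hz]; ring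
        · rw [hf i', if_neg h1]; ring
      · rfl
    have h := H y
    rw [e1, e2, e3, add_zero, add_zero] at h
    linear_combination ε i0 * h - a i0 * hε i0
  -- Step 2 : 2 * b = 0
  have hb : ∀ i0 j0, i0 < j0 → 2 * b i0 j0 = 0 := by
    intro i0 j0 hij
    set y := ∑ s ∈ ({i0, j0} : Finset (Fin (2*g))), X (pf s) with hy
    have hf : ∀ m, cbar (X m) y = if m = i0 ∨ m = j0 then ε m else 0 := by
      intro m; rw [hy, hES m]; simp [hε_def]
    have e1 : (∑ m, a m * cbar (X m) y) = 0 :=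
      Finset.sum_eq_zero fun m _ => by rw [ha m, zero_mul]
    have e2 : (∑ i', ∑ j', if i' < j' then
        b i' j' * (2 * (cbar (X i') y * cbar (X j') y)) else 0)
        = b i0 j0 * (2 * (ε i0 * ε j0)) := by
      rw [Finset.sum_eq_single i0]
      · rw [Finset.sum_eq_single j0]
        · rw [if_pos hij, hf i0, hf j0, if_pos (Or.inl rfl), if_pos (Or.inr rfl)]
        · intro j' _ hj'
          split_ifs with hlt
          · have hz : cbar (X j') y = 0 := by
              rw [hf j', if_neg]
              rintro (rfl | rfl)
              · exact absurd hlt (lt_irrefl _)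
              · exact hj' rfl
            rw [hz]; ring
          · rfl
        · intro h; exact absurd (Finset.mem_univ j0) h
      · intro i' _ hi'
        refine Finset.sum_eq_zero fun j' _ => ?_
        split_ifs with hlt
        · rcases eq_or_ne i' j0 with rfl | h2
          · have hz : cbar (X j') y = 0 := by
              rw [hf j', if_neg]
              rintro (rfl | rfl)
              · exact absurd (hij.trans hlt) (lt_irrefl _)
              · exact absurd hlt (lt_irrefl _)
            rw [hz]; ring
          · have hz : cbar (X i') y = 0 := by
              rw [hf i', if_neg]; rintro (rfl | rfl); exacts [hi' rfl, h2 rfl]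
            rw [hz]; ring
        · rfl
      · intro h; exact absurd (Finset.mem_univ i0) h
    have e3 : (∑ i', ∑ j', ∑ k', if i' < j' ∧ j' < k' then
        c i' j' k' * (4 * (cbar (X i') y * (cbar (X j') y * cbar (X k') y))) else 0) = 0 := by
      refine Finset.sum_eq_zero fun i' _ => Finset.sum_eq_zero fun j' _ =>
        Finset.sum_eq_zero fun k' _ => ?_
      split_ifs with hlt
      obtain ⟨h1, h2⟩ := hlt
      · by_cases hmi : i' = i0
        · subst hmi
          by_cases hmj : j' = j0
          · subst hmj
            have hz : cbar (X k') y = 0 := by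
              rw [hf k', if_neg]
              rintro (rfl | rfl)
              · exact absurd (h1.trans h2) (lt_irrefl _)
              · exact absurd h2 (lt_irrefl _)
            rw [hz]; ring
          · have hz : cbar (X j') y = 0 := by
              rw [hf j', if_neg]
              rintro (rfl | rfl)
              · exact absurd h1 (lt_irrefl _)
              · exact hmj rfl
            rw [hz]; ring
        · by_cases hmj : i' = j0
          · subst hmj
            have hz : cbar (X j') y = 0 := by
              rw [hf j', if_neg]
              rintro (rfl | rfl)
              · exact absurd (hij.trans h1) (lt_irrefl _)
              · exact absurd h1 (lt_irrefl _)
            rw [hz]; ring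
          · have hz : cbar (X i') y = 0 := by
              rw [hf i', if_neg]; rintro (rfl | rfl); exacts [hmi rfl, hmj rfl]
            rw [hz]; ring
      · rfl
    have h := H y
    rw [e1, e2, e3, zero_add, add_zero] at h
    linear_combination (ε i0 * ε j0) * h - (2 * b i0 j0 * (ε j0 * ε j0)) * hε i0
      - (2 * b i0 j0) * hε j0
  refine ⟨ha, hb, ?_⟩
  -- Step 3 : 4 * c = 0
  intro i0 j0 k0 hij hjk
  set y := ∑ s ∈ ({i0, j0, k0} : Finset (Fin (2*g))), X (pf s) with hy
  have hf : ∀ m, cbar (X m) y = if m = i0 ∨ m = j0 ∨ m = k0 then ε m else 0 := by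
    intro m; rw [hy, hES m]; simp [hε_def]
  have e1 : (∑ m, a m * cbar (X m) y) = 0 :=
    Finset.sum_eq_zero fun m _ => by rw [ha m, zero_mul]
  have e2 : (∑ i', ∑ j', if i' < j' then
      b i' j' * (2 * (cbar (X i') y * cbar (X j') y)) else 0) = 0 := by
    refine Finset.sum_eq_zero fun i' _ => Finset.sum_eq_zero fun j' _ => ?_
    split_ifs with hlt
    · by_cases h1 : i' = i0 ∨ i' = j0 ∨ i' = k0
      · by_cases h2 : j' = i0 ∨ j' = j0 ∨ j' = k0
        · rw [hf i', if_pos h1, hf j', if_pos h2]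
          linear_combination (ε i' * ε j') * (hb i' j' hlt)
        · rw [hf j', if_neg h2]; ring
      · rw [hf i', if_neg h1]; ring
    · rfl
  have e3 : (∑ i', ∑ j', ∑ k', if i' < j' ∧ j' < k' then
      c i' j' k' * (4 * (cbar (X i') y * (cbar (X j') y * cbar (X k') y))) else 0)
      = c i0 j0 k0 * (4 * (ε i0 * (ε j0 * ε k0))) := by
    rw [Finset.sum_eq_single i0]
    · rw [Finset.sum_eq_single j0]
      · rw [Finset.sum_eq_single k0]
        · rw [if_pos ⟨hij, hjk⟩, hf i0, hf j0, hf k0, if_pos (Or.inl rfl),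
            if_pos (Or.inr (Or.inl rfl)), if_pos (Or.inr (Or.inr rfl))]
        · intro k' _ hk'
          split_ifs with hlt
          · have hz : cbar (X k') y = 0 := by
              rw [hf k', if_neg]
              rintro (rfl | rfl | rfl)
              · exact absurd (hlt.1.trans hlt.2) (lt_irrefl _)
              · exact absurd hlt.2 (lt_irrefl _)
              · exact hk' rfl
            rw [hz]; ring
          · rfl
        · intro h; exact absurd (Finset.mem_univ k0) h
      · intro j' _ hj'
        refine Finset.sum_eq_zero fun k' _ => ?_
        split_ifs with hlt
        · obtain ⟨h1, h2⟩ := hlt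
          by_cases hm : j' = k0
          · subst hm
            have hz : cbar (X k') y = 0 := by
              rw [hf k', if_neg]
              rintro (rfl | rfl | rfl)
              · exact absurd (h1.trans h2) (lt_irrefl _)
              · exact absurd (hjk.trans h2) (lt_irrefl _)
              · exact absurd h2 (lt_irrefl _)
            rw [hz]; ring
          · have hz : cbar (X j') y = 0 := by
              rw [hf j', if_neg]
              rintro (rfl | rfl | rfl)
              · exact absurd h1 (lt_irrefl _)
              · exact hj' rfl
              · exact hm rfl
            rw [hz]; ring
        · rfl
      · intro h; exact absurd (Finset.mem_univ j0) h
    · intro i' _ hi'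
      refine Finset.sum_eq_zero fun j' _ => Finset.sum_eq_zero fun k' _ => ?_
      split_ifs with hlt
      · obtain ⟨h1, h2⟩ := hlt
        by_cases hm1 : i' = j0
        · subst hm1
          by_cases hm2 : j' = k0
          · subst hm2
            have hz : cbar (X k') y = 0 := by
              rw [hf k', if_neg]
              rintro (rfl | rfl | rfl)
              · exact absurd ((hij.trans h1).trans h2) (lt_irrefl _)
              · exact absurd (h1.trans h2) (lt_irrefl _)
              · exact absurd h2 (lt_irrefl _)
            rw [hz]; ring
          · have hz : cbar (X j') y = 0 := by
              rw [hf j', if_neg]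
              rintro (rfl | rfl | rfl)
              · exact absurd (hij.trans h1) (lt_irrefl _)
              · exact absurd h1 (lt_irrefl _)
              · exact hm2 rfl
            rw [hz]; ring
        · by_cases hm2 : i' = k0
          · subst hm2
            have hz : cbar (X j') y = 0 := by
              rw [hf j', if_neg]
              rintro (rfl | rfl | rfl)
              · exact absurd ((hij.trans hjk).trans h1) (lt_irrefl _)
              · exact absurd (hjk.trans h1) (lt_irrefl _)
              · exact absurd h1 (lt_irrefl _)
            rw [hz]; ring
          · have hz : cbar (X i') y = 0 := by
              rw [hf i', if_neg]; rintro (rfl | rfl | rfl)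
              exacts [hi' rfl, hm1 rfl, hm2 rfl]
            rw [hz]; ring
      · rfl
    · intro h; exact absurd (Finset.mem_univ i0) h
  have h := H y
  rw [e1, e2, e3, zero_add, zero_add] at h
  linear_combination (ε i0 * (ε j0 * ε k0)) * h
    - (4 * c i0 j0 k0 * (ε j0 * ε j0) * (ε k0 * ε k0)) * hε i0
    - (4 * c i0 j0 k0 * (ε k0 * ε k0)) * hε j0 - (4 * c i0 j0 k0) * hε k0

include hX hi hsgn hcbar in
set_option maxHeartbeats 2000000 in
lemma part2 :
    Nonempty
      ((Submodule.span (ZMod 8)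
          ({f : V → ZMod 8 | ∃ i', f = fun y => cbar (X i') y}
            ∪ {f | ∃ i' j', i' < j' ∧ f = fun y => 2 * (cbar (X i') y * cbar (X j') y)}
            ∪ {f | ∃ i' j' k', i' < j' ∧ j' < k' ∧
                f = fun y => 4 * (cbar (X i') y * (cbar (X j') y * cbar (X k') y))})) ≃+
        ((Fin (2 * g) → ZMod 8) × (Fin (Nat.choose (2 * g) 2) → ZMod 4)
          × (Fin (Nat.choose (2 * g) 3) → ZMod 2))) := by
  classical
  set S : Set (V → ZMod 8) :=
    ({f : V → ZMod 8 | ∃ i', f = fun y => cbar (X i') y}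
      ∪ {f | ∃ i' j', i' < j' ∧ f = fun y => 2 * (cbar (X i') y * cbar (X j') y)}
      ∪ {f | ∃ i' j' k', i' < j' ∧ j' < k' ∧
          f = fun y => 4 * (cbar (X i') y * (cbar (X j') y * cbar (X k') y))}) with hS
  have hc2 : Fintype.card {s : Finset (Fin (2 * g)) // s.card = 2} = Nat.choose (2 * g) 2 := by
    simp
  have hc3 : Fintype.card {s : Finset (Fin (2 * g)) // s.card = 3} = Nat.choose (2 * g) 3 := by
    simp
  set e2 : {s : Finset (Fin (2 * g)) // s.card = 2} ≃ Fin (Nat.choose (2 * g) 2) :=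
    Fintype.equivFinOfCardEq hc2 with he2
  set e3 : {s : Finset (Fin (2 * g)) // s.card = 3} ≃ Fin (Nat.choose (2 * g) 3) :=
    Fintype.equivFinOfCardEq hc3 with he3
  set Phi : ((Fin (2 * g) → ZMod 8) × (Fin (Nat.choose (2 * g) 2) → ZMod 4)
      × (Fin (Nat.choose (2 * g) 3) → ZMod 2)) → (V → ZMod 8) := fun x => fun y =>
    (∑ m, x.1 m * cbar (X m) y)
    + (∑ s : {s : Finset (Fin (2 * g)) // s.card = 2},
        lift2 (x.2.1 (e2 s)) * ∏ m ∈ s.1, cbar (X m) y)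
    + (∑ s : {s : Finset (Fin (2 * g)) // s.card = 3},
        lift3 (x.2.2 (e3 s)) * ∏ m ∈ s.1, cbar (X m) y) with hPhi
  -- additivity
  have hPhi_add : ∀ x x', Phi (x + x') = Phi x + Phi x' := by
    intro x x'
    funext y
    simp only [hPhi, Prod.fst_add, Prod.snd_add, Pi.add_apply, add_mul, lift2_add, lift3_add,
      Finset.sum_add_distrib]
    ring
  -- scalar multiplication
  have hPhi_smul : ∀ (r : ZMod 8) x,
      r • Phi x = Phi (r • x.1, fun p => (r.val : ZMod 4) * x.2.1 p,
        fun p => (r.val : ZMod 2) * x.2.2 p) := by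
    intro r x
    funext y
    simp only [hPhi, Pi.smul_apply, smul_eq_mul]
    rw [mul_add, mul_add, Finset.mul_sum, Finset.mul_sum, Finset.mul_sum]
    congr 1
    · congr 1
      · exact Finset.sum_congr rfl fun m _ => by
          simp only [Pi.smul_apply, smul_eq_mul, mul_assoc]
      · exact Finset.sum_congr rfl fun s _ => by rw [← mul_assoc, lift2_smul]
    · exact Finset.sum_congr rfl fun s _ => by rw [← mul_assoc, lift3_smul]
  have hPhi_zero : Phi 0 = 0 := by
    funext y
    simp [hPhi, lift2_zero, lift3_zero]
  -- every Phi x lies in the span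
  have hmem : ∀ x, Phi x ∈ Submodule.span (ZMod 8) S := by
    intro x
    have hrepr : Phi x =
        (∑ m, x.1 m • (fun y => cbar (X m) y))
        + (∑ s : {s : Finset (Fin (2 * g)) // s.card = 2},
            (((x.2.1 (e2 s)).val : ℕ) : ZMod 8) • (fun y => 2 * ∏ m ∈ s.1, cbar (X m) y))
        + (∑ s : {s : Finset (Fin (2 * g)) // s.card = 3},
            (((x.2.2 (e3 s)).val : ℕ) : ZMod 8) • (fun y => 4 * ∏ m ∈ s.1, cbar (X m) y)) := by
      funext y
      simp only [hPhi, Pi.add_apply, Finset.sum_apply, Pi.smul_apply, smul_eq_mul]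
      congr 1
      congr 1
      · exact Finset.sum_congr rfl fun s _ => by unfold lift2; ring
      · exact Finset.sum_congr rfl fun s _ => by unfold lift3; ring
    rw [hrepr]
    refine Submodule.add_mem _ (Submodule.add_mem _ ?_ ?_) ?_
    · refine Submodule.sum_mem _ fun m _ => Submodule.smul_mem _ _ (Submodule.subset_span ?_)
      exact Or.inl (Or.inl ⟨m, rfl⟩)
    · refine Submodule.sum_mem _ fun s _ => Submodule.smul_mem _ _ (Submodule.subset_span ?_)
      obtain ⟨i', j', hij, hs⟩ := exists_pair s.1 s.2
      refine Or.inl (Or.inr ⟨i', j', hij, ?_⟩)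
      funext y
      rw [hs, Finset.prod_pair hij.ne]
    · refine Submodule.sum_mem _ fun s _ => Submodule.smul_mem _ _ (Submodule.subset_span ?_)
      obtain ⟨i', j', k', hij, hjk, hs⟩ := exists_triple s.1 s.2
      refine Or.inr ⟨i', j', k', hij, hjk, ?_⟩
      funext y
      rw [hs, prod3 hij hjk]
  -- every element of the span is a Phi x
  have hsurj : ∀ f ∈ Submodule.span (ZMod 8) S, ∃ x, Phi x = f := by
    intro f hf
    refine Submodule.span_induction ?_ ⟨0, hPhi_zero⟩ ?_ ?_ hf
    · rintro f (hf | hf)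
      · rcases hf with ⟨m, rfl⟩ | ⟨i', j', hij, rfl⟩
        · refine ⟨(fun m' => if m' = m then 1 else 0, 0, 0), ?_⟩
          funext y
          simp only [hPhi]
          rw [Finset.sum_eq_single m]
          · simp [lift2_zero, lift3_zero]
          · intro m' _ hm'; rw [if_neg hm', zero_mul]
          · intro h; exact absurd (Finset.mem_univ m) h
        · refine ⟨(0, fun p => if p = e2 ⟨{i', j'}, card2 hij⟩ then 1 else 0, 0), ?_⟩
          funext y
          simp only [hPhi]
          rw [Finset.sum_eq_single (⟨{i', j'}, card2 hij⟩ :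
            {s : Finset (Fin (2 * g)) // s.card = 2})]
          · simp only [eq_self_iff_true, if_true, lift2_one, lift3_zero, Pi.zero_apply, zero_mul,
              Finset.sum_const_zero, Finset.prod_pair hij.ne]
            ring
          · intro s _ hs
            rw [if_neg (fun hc => hs (e2.injective hc)), lift2_zero, zero_mul]
          · intro h; exact absurd (Finset.mem_univ _) h
      · rcases hf with ⟨i', j', k', hij, hjk, rfl⟩
        refine ⟨(0, 0, fun p => if p = e3 ⟨{i', j', k'}, card3 hij hjk⟩ then 1 else 0), ?_⟩
        funext y
        simp only [hPhi]
        rw [Finset.sum_eq_single (⟨{i', j', k'}, card3 hij hjk⟩ :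
          {s : Finset (Fin (2 * g)) // s.card = 3})]
        · simp only [eq_self_iff_true, if_true, lift3_one, lift2_zero, Pi.zero_apply, zero_mul,
            Finset.sum_const_zero, prod3 hij hjk]
          ring
        · intro s _ hs
          rw [if_neg (fun hc => hs (e3.injective hc)), lift3_zero, zero_mul]
        · intro h; exact absurd (Finset.mem_univ _) h
    · rintro f f' - - ⟨x, rfl⟩ ⟨x', rfl⟩
      exact ⟨x + x', hPhi_add x x'⟩
    · rintro r f - ⟨x, rfl⟩
      exact ⟨(r • x.1, fun p => (r.val : ZMod 4) * x.2.1 p,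
        fun p => (r.val : ZMod 2) * x.2.2 p), (hPhi_smul r x).symm⟩
  -- injectivity
  have hinj : ∀ x, Phi x = 0 → x = 0 := by
    rintro ⟨a, bb, cc⟩ hx
    have key : ∀ y : V,
        (∑ i', a i' * cbar (X i') y)
        + (∑ i', ∑ j', if i' < j' then
            (if h : i' < j' then (((bb (e2 ⟨{i', j'}, card2 h⟩)).val : ℕ) : ZMod 8)
              else 0) * (2 * (cbar (X i') y * cbar (X j') y)) else 0)
        + (∑ i', ∑ j', ∑ k', if i' < j' ∧ j' < k' then
            (if h : i' < j' ∧ j' < k' then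
              (((cc (e3 ⟨{i', j', k'}, card3 h.1 h.2⟩)).val : ℕ) : ZMod 8) else 0)
            * (4 * (cbar (X i') y * (cbar (X j') y * cbar (X k') y))) else 0)
        = 0 := by
      intro y
      have h0 : (∑ m, a m * cbar (X m) y)
          + (∑ s : {s : Finset (Fin (2 * g)) // s.card = 2},
              lift2 (bb (e2 s)) * ∏ m ∈ s.1, cbar (X m) y)
          + (∑ s : {s : Finset (Fin (2 * g)) // s.card = 3},
              lift3 (cc (e3 s)) * ∏ m ∈ s.1, cbar (X m) y) = 0 := congrFun hx y
      have step2 := reindex2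
        (fun t => if h : t.card = 2 then lift2 (bb (e2 ⟨t, h⟩)) else 0)
        (fun m => cbar (X m) y)
      have step3 := reindex3
        (fun t => if h : t.card = 3 then lift3 (cc (e3 ⟨t, h⟩)) else 0)
        (fun m => cbar (X m) y)
      have hB : (∑ s : {s : Finset (Fin (2 * g)) // s.card = 2},
            lift2 (bb (e2 s)) * ∏ m ∈ s.1, cbar (X m) y)
          = ∑ i', ∑ j', if i' < j' then
              (if h : i' < j' then (((bb (e2 ⟨{i', j'}, card2 h⟩)).val : ℕ) : ZMod 8)
                else 0) * (2 * (cbar (X i') y * cbar (X j') y)) else 0 := by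
        refine Eq.trans (Finset.sum_congr rfl fun s _ => ?_) (step2.trans
          (Finset.sum_congr rfl fun i' _ => Finset.sum_congr rfl fun j' _ => ?_))
        · have hd : (if h : (s.1).card = 2 then lift2 (bb (e2 ⟨s.1, h⟩)) else 0)
              = lift2 (bb (e2 s)) := by rw [dif_pos s.2]
          rw [hd]
        · by_cases h : i' < j'
          · rw [if_pos h, if_pos h, dif_pos (card2 h), dif_pos h]
            unfold lift2; ring
          · rw [if_neg h, if_neg h]
      have hC : (∑ s : {s : Finset (Fin (2 * g)) // s.card = 3},
            lift3 (cc (e3 s)) * ∏ m ∈ s.1, cbar (X m) y)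
          = ∑ i', ∑ j', ∑ k', if i' < j' ∧ j' < k' then
              (if h : i' < j' ∧ j' < k' then
                (((cc (e3 ⟨{i', j', k'}, card3 h.1 h.2⟩)).val : ℕ) : ZMod 8) else 0)
              * (4 * (cbar (X i') y * (cbar (X j') y * cbar (X k') y))) else 0 := by
        refine Eq.trans (Finset.sum_congr rfl fun s _ => ?_) (step3.trans
          (Finset.sum_congr rfl fun i' _ => Finset.sum_congr rfl fun j' _ =>
            Finset.sum_congr rfl fun k' _ => ?_))
        · have hd : (if h : (s.1).card = 3 then lift3 (cc (e3 ⟨s.1, h⟩)) else 0)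
              = lift3 (cc (e3 s)) := by rw [dif_pos s.2]
          rw [hd]
        · by_cases h : i' < j' ∧ j' < k'
          · rw [if_pos h, if_pos h, dif_pos (card3 h.1 h.2), dif_pos h]
            unfold lift3; ring
          · rw [if_neg h, if_neg h]
      rw [← hB, ← hC]
      exact h0
    obtain ⟨ha, hb, hc⟩ := part1 Q X hX ii hi q sgn hsgn cbar hcbar a _ _ key
    have hbb : bb = 0 := by
      funext p
      obtain ⟨i', j', hij, hs⟩ := exists_pair (e2.symm p).1 (e2.symm p).2
      have h2 := hb i' j' hij
      simp only [dif_pos hij] at h2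
      have hsub : (⟨{i', j'}, card2 hij⟩ : {s : Finset (Fin (2 * g)) // s.card = 2})
          = e2.symm p := Subtype.ext hs.symm
      rw [hsub, Equiv.apply_symm_apply] at h2
      exact zm4_eq_zero _ h2
    have hcc : cc = 0 := by
      funext p
      obtain ⟨i', j', k', hij, hjk, hs⟩ := exists_triple (e3.symm p).1 (e3.symm p).2
      have h2 := hc i' j' k' hij hjk
      simp only [dif_pos (show i' < j' ∧ j' < k' from ⟨hij, hjk⟩)] at h2
      have hsub : (⟨{i', j', k'}, card3 hij hjk⟩ : {s : Finset (Fin (2 * g)) // s.card = 3})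
          = e3.symm p := Subtype.ext hs.symm
      rw [hsub, Equiv.apply_symm_apply] at h2
      exact zm2_eq_zero _ h2
    have haa : a = 0 := funext ha
    rw [haa, hbb, hcc]
    rfl
  -- assemble the equivalence
  let F : _ →+ (Submodule.span (ZMod 8) S) :=
    AddMonoidHom.mk' (fun x => ⟨Phi x, hmem x⟩)
      (fun x x' => Subtype.ext (hPhi_add x x'))
  have hFinj : Function.Injective F := by
    rw [injective_iff_map_eq_zero]
    intro x hxz
    exact hinj x (congrArg Subtype.val hxz)
  have hFsurj : Function.Surjective F := by
    rintro ⟨f, hf⟩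
    obtain ⟨x, hxf⟩ := hsurj f hf
    exact ⟨x, Subtype.ext hxf⟩
  exact ⟨(AddEquiv.ofBijective F ⟨hFinj, hFsurj⟩).symm⟩


end Aux

/-- Let `X : Fin (2g) → V` be a symplectic basis over `𝔽₂` (basis vectors
`X (2i)` and `X (2i+1)` pair to `1`, all other pairings `0`; this is encoded by
`Q (X i) (X j) = 1` iff `i ≠ j` lie in the same block `{2r, 2r+1}`).  If a `ℤ/8`-linear
combination `Σ aᵢ X̄ᵢ + Σ_{i<j} bᵢⱼ (2 X̄ᵢ X̄ⱼ) + Σ_{i<j<k} cᵢⱼₖ (4 X̄ᵢ X̄ⱼ X̄ₖ)` vanishes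
identically, then `aᵢ = 0`, `2 bᵢⱼ = 0` and `4 cᵢⱼₖ = 0`; in particular these functions
span a `ℤ/8`-submodule of `Map(V, ℤ/8)` isomorphic (as an additive group) to
`(ℤ/8)^{2g} ⊕ (ℤ/4)^{C(2g,2)} ⊕ (ℤ/2)^{C(2g,3)}`. -/
theorem stmt3 (g : ℕ) (V : Type*) [AddCommGroup V] [Module (ZMod 2) V]
    (Q : V →ₗ[ZMod 2] V →ₗ[ZMod 2] ZMod 2)
    (X : Module.Basis (Fin (2 * g)) (ZMod 2) V)
    (hX : ∀ i j : Fin (2 * g),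
      Q (X i) (X j) = if (i.val / 2 = j.val / 2 ∧ i ≠ j) then 1 else 0)
    (i : V → V → ZMod 8)
    (hi : ∀ z y, i z y = if Q z y = 1 then 1 else 0)
    (q : V → ZMod 2)
    (hq : ∀ x y, q (x + y) = q x + q y + Q x y)
    (sgn : ZMod 2 → ZMod 8)
    (hsgn : ∀ t, sgn t = if t = 0 then 1 else -1)
    (cbar : V → V → ZMod 8)
    (hcbar : ∀ C y, cbar C y = sgn (q C) * i C y) :
    (∀ (a : Fin (2 * g) → ZMod 8) (b : Fin (2 * g) → Fin (2 * g) → ZMod 8)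
      (c : Fin (2 * g) → Fin (2 * g) → Fin (2 * g) → ZMod 8),
      (∀ y : V,
        (∑ i', a i' * cbar (X i') y)
        + (∑ i', ∑ j', if i' < j' then
            b i' j' * (2 * (cbar (X i') y * cbar (X j') y)) else 0)
        + (∑ i', ∑ j', ∑ k', if i' < j' ∧ j' < k' then
            c i' j' k' * (4 * (cbar (X i') y * (cbar (X j') y * cbar (X k') y))) else 0)
        = 0) →
      (∀ i', a i' = 0) ∧ (∀ i' j', i' < j' → 2 * b i' j' = 0) ∧
        (∀ i' j' k', i' < j' → j' < k' → 4 * c i' j' k' = 0)) ∧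
    Nonempty
      ((Submodule.span (ZMod 8)
          ({f : V → ZMod 8 | ∃ i', f = fun y => cbar (X i') y}
            ∪ {f | ∃ i' j', i' < j' ∧ f = fun y => 2 * (cbar (X i') y * cbar (X j') y)}
            ∪ {f | ∃ i' j' k', i' < j' ∧ j' < k' ∧
                f = fun y => 4 * (cbar (X i') y * (cbar (X j') y * cbar (X k') y))})) ≃+
        ((Fin (2 * g) → ZMod 8) × (Fin (Nat.choose (2 * g) 2) → ZMod 4)
          × (Fin (Nat.choose (2 * g) 3) → ZMod 2))) := by
  exact ⟨fun a b c H => part1 Q X hX i hi q sgn hsgn cbar hcbar a b c H,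
    part2 Q X hX i hi q sgn hsgn cbar hcbar⟩
end

section
/- Let F be a field of characteristic 2 and V a 2g-dimensional symplectic F-vector space, g ≥ 2. If g is odd then ker(δ₂) ⊆ ⋀²V is an irreducible Sp_{2g}(𝔽₂)-module (where Sp_{2g}(𝔽₂) is embedded via a symplectic basis). If g is even, then the line ⟨ω⟩ is contained in ker(δ₂) and the quotient ker(δ₂)/⟨ω⟩ is an irreducible Sp_{2g}(𝔽₂)-module. -/
set_option linter.unusedSectionVars false
set_option maxHeartbeats 1000000


open ExteriorAlgebra

/-- The wedge `w₁ ∧ ⋯ ∧ wₙ` as an element of the `n`-th exterior power submodule. -/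
noncomputable def expWedge (F : Type*) {V : Type*} [CommRing F] [AddCommGroup V]
    [Module F V] (n : ℕ) (w : Fin n → V) : ⋀[F]^n V :=
  ⟨ExteriorAlgebra.ιMulti F n w, ExteriorAlgebra.ιMulti_range F n ⟨w, rfl⟩⟩

/-- An isometry of `Q` lies in `Sp_{2g}(𝔽₂)` (embedded via the symplectic basis `b`) when it
maps every basis vector to a sum of basis vectors, i.e. it preserves the `𝔽₂`-span of `b`. -/
def IsSpF2 {F V : Type*} [Field F] [AddCommGroup V] [Module F V] {g : ℕ}
    (Q : V →ₗ[F] V →ₗ[F] F) (b : Module.Basis (Fin g × Bool) F V) (A : V ≃ₗ[F] V) : Prop :=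
  (∀ u v, Q (A u) (A v) = Q u v) ∧
    ∀ p : Fin g × Bool, ∃ S : Finset (Fin g × Bool), A (b p) = ∑ q ∈ S, b q

section Aux

variable {F V : Type*} [Field F] [CharP F 2] [AddCommGroup V] [Module F V]

lemma addSelfF (a : F) : a + a = 0 := CharTwo.add_self_eq_zero a

lemma addSelfM (F : Type*) {M : Type*} [Field F] [CharP F 2] [AddCommGroup M]
    [Module F M] (x : M) : x + x = 0 := by
  have h : (2 : F) • x = 0 := by
    rw [show (2 : F) = 0 from CharTwo.two_eq_zero, zero_smul]
  rwa [two_smul] at h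

lemma eq_of_add_eq_zeroM (F : Type*) {M : Type*} [Field F] [CharP F 2] [AddCommGroup M]
    [Module F M] {x y : M} (h : x + y = 0) : x = y := by
  have h1 : -x = y := by rw [neg_eq_iff_add_eq_zero]; exact h
  have h2 : -x = x := by rw [neg_eq_iff_add_eq_zero]; exact addSelfM F x
  rw [← h1, h2]

lemma eq_of_add_eq_zeroF {a c : F} (h : a + c = 0) : a = c := eq_of_add_eq_zeroM F h

variable (F) in
noncomputable def wedge (u v : V) : ⋀[F]^2 V := expWedge F 2 ![u, v]

lemma upd0 (u v z : V) : Function.update ![u, v] (0 : Fin 2) z = ![z, v] := by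
  funext i; fin_cases i <;> simp

lemma upd1 (u v z : V) : Function.update ![u, v] (1 : Fin 2) z = ![u, z] := by
  funext i; fin_cases i <;> simp

lemma wedge_add_left (u u' v : V) :
    wedge F (u + u') v = wedge F u v + wedge F u' v := by
  apply Subtype.ext
  have := (ιMulti F 2 (M := V)).map_update_add ![u, v] 0 u u'
  simpa [upd0, wedge, expWedge] using this

lemma wedge_add_right (u v v' : V) :
    wedge F u (v + v') = wedge F u v + wedge F u v' := by
  apply Subtype.ext
  have := (ιMulti F 2 (M := V)).map_update_add ![u, v] 1 v v'
  simpa [upd1, wedge, expWedge] using this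

lemma wedge_smul_left (a : F) (u v : V) : wedge F (a • u) v = a • wedge F u v := by
  apply Subtype.ext
  have := (ιMulti F 2 (M := V)).map_update_smul ![u, v] 0 a u
  simpa [upd0, wedge, expWedge] using this

lemma wedge_smul_right (a : F) (u v : V) : wedge F u (a • v) = a • wedge F u v := by
  apply Subtype.ext
  have := (ιMulti F 2 (M := V)).map_update_smul ![u, v] 1 a v
  simpa [upd1, wedge, expWedge] using this

lemma wedge_self (u : V) : wedge F u u = 0 := by
  apply Subtype.ext
  have := (ιMulti F 2 (M := V)).map_eq_zero_of_eq ![u, u] (i := 0) (j := 1) (by simp) (by decide)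
  simpa [wedge, expWedge] using this

lemma wedge_comm (u v : V) : wedge F u v = wedge F v u := by
  have h : wedge F (u + v) (u + v) = 0 := wedge_self _
  rw [wedge_add_left, wedge_add_right, wedge_add_right, wedge_self, wedge_self] at h
  refine eq_of_add_eq_zeroM F ?_
  rw [← h]; abel


variable (F) in
noncomputable def wedgeL : V →ₗ[F] V →ₗ[F] ⋀[F]^2 V :=
  LinearMap.mk₂ F (wedge F) wedge_add_left wedge_smul_left wedge_add_right wedge_smul_right

@[simp] lemma wedgeL_apply (u v : V) : wedgeL F u v = wedge F u v := rfl

/-- `ExteriorAlgebra.map` preserves the second exterior power. -/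
lemma map_mem_pow (f : V →ₗ[F] V) {x : ExteriorAlgebra F V} (hx : x ∈ ⋀[F]^2 V) :
    ExteriorAlgebra.map f x ∈ ⋀[F]^2 V := by
  rw [← ιMulti_span_fixedDegree] at hx ⊢
  induction hx using Submodule.span_induction with
  | mem y hy =>
    obtain ⟨m, rfl⟩ := hy
    rw [map_apply_ιMulti]
    exact Submodule.subset_span ⟨_, rfl⟩
  | zero => simpa using Submodule.zero_mem _
  | add y z _ _ hy hz => rw [map_add]; exact Submodule.add_mem _ hy hz
  | smul a y _ hy => rw [map_smul]; exact Submodule.smul_mem _ a hy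

section Main

variable {g : ℕ} (Q : V →ₗ[F] V →ₗ[F] F) (hAlt : ∀ v, Q v v = 0)
  (b : Module.Basis (Fin g × Bool) F V)
  (hb1 : ∀ i j, Q (b (i, false)) (b (j, true)) = if i = j then 1 else 0)
  (hb2 : ∀ i j, Q (b (i, false)) (b (j, false)) = 0)
  (hb3 : ∀ i j, Q (b (i, true)) (b (j, true)) = 0)

def mate (p : Fin g × Bool) : Fin g × Bool := (p.1, !p.2)

@[simp] lemma mate_mate (p : Fin g × Bool) : mate (mate p) = p := by
  simp [mate]

lemma mate_inj {p q : Fin g × Bool} (h : mate p = mate q) : p = q := by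
  rw [← mate_mate p, h, mate_mate]

@[simp] lemma mate_fst (p : Fin g × Bool) : (mate p).1 = p.1 := rfl

lemma Qsymm (hAlt : ∀ v, Q v v = 0) (x y : V) : Q x y = Q y x := by
  have h : Q (x + y) (x + y) = 0 := hAlt _
  simp only [map_add, LinearMap.add_apply, hAlt] at h
  have h2 : Q x y + Q y x = 0 := by linear_combination h
  exact eq_of_add_eq_zeroM F h2

lemma Qbb (hAlt : ∀ v, Q v v = 0)
    (hb1 : ∀ i j, Q (b (i, false)) (b (j, true)) = if i = j then 1 else 0)
    (hb2 : ∀ i j, Q (b (i, false)) (b (j, false)) = 0)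
    (hb3 : ∀ i j, Q (b (i, true)) (b (j, true)) = 0)
    (p q : Fin g × Bool) :
    Q (b p) (b q) = if q = mate p then 1 else 0 := by
  obtain ⟨i, s⟩ := p; obtain ⟨j, t⟩ := q
  cases s <;> cases t <;>
    simp only [mate, Bool.not_false, Bool.not_true, Prod.mk.injEq, hb1, hb2, hb3]
  · simp
  · by_cases h : i = j <;> simp [h, eq_comm]
  · rw [Qsymm Q hAlt, hb1]; by_cases h : i = j <;> simp [h, eq_comm]
  · simp

def ordP (p : Fin g × Bool) : ℕ := 2 * p.1.val + p.2.toNat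

lemma ordP_inj {p q : Fin g × Bool} (h : ordP p = ordP q) : p = q := by
  obtain ⟨i, s⟩ := p; obtain ⟨j, t⟩ := q
  have hi : i.val = j.val ∧ s.toNat = t.toNat := by
    cases s <;> cases t <;> simp [ordP, Bool.toNat] at h ⊢ <;> omega
  have : i = j := Fin.ext hi.1
  have : s = t := by cases s <;> cases t <;> simp_all [Bool.toNat]
  simp_all


noncomputable def kap (pq : (Fin g × Bool) × (Fin g × Bool)) : ⋀[F]^2 V :=
  if ordP pq.1 < ordP pq.2 then wedge F (b pq.1) (b pq.2) else 0

lemma wedge_mem_span (u v : V) :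
    wedge F u v ∈ Submodule.span F (Set.range (kap b)) := by
  have hcalc : wedge F u v
      = ∑ p, ∑ q, (b.repr u p * b.repr v q) • wedge F (b p) (b q) := by
    calc wedge F u v = wedgeL F (∑ p, b.repr u p • b p) (∑ q, b.repr v q • b q) := by
          rw [b.sum_repr, b.sum_repr]; rfl
    _ = ∑ p, ∑ q, (b.repr u p * b.repr v q) • wedge F (b p) (b q) := by
          simp only [map_sum, LinearMap.sum_apply, map_smul, LinearMap.smul_apply,
            Finset.smul_sum, smul_smul]
          rw [Finset.sum_comm]
          refine Finset.sum_congr rfl fun p _ => Finset.sum_congr rfl fun q _ => ?_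
          rw [mul_comm]
          rfl
  rw [hcalc]
  refine Submodule.sum_mem _ fun p _ => Submodule.sum_mem _ fun q _ => ?_
  rcases lt_trichotomy (ordP p) (ordP q) with h | h | h
  · have : wedge F (b p) (b q) = kap b (p, q) := by simp [kap, h]
    rw [this]
    exact Submodule.smul_mem _ _ (Submodule.subset_span ⟨(p, q), rfl⟩)
  · have : p = q := ordP_inj h
    rw [this, wedge_self, smul_zero]
    exact Submodule.zero_mem _
  · have : wedge F (b p) (b q) = kap b (q, p) := by
      rw [wedge_comm]; simp [kap, h]
    rw [this]
    exact Submodule.smul_mem _ _ (Submodule.subset_span ⟨(q, p), rfl⟩)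

lemma kap_span : Submodule.span F (Set.range (kap (F := F) b)) = ⊤ := by
  rw [eq_top_iff]
  rintro ⟨x, hx⟩ -
  set N := Submodule.span F (Set.range (kap (F := F) b)) with hN
  have key0 : Submodule.span F (Set.range (ιMulti F 2 (M := V)))
      ≤ Submodule.map (Submodule.subtype _) N := by
    rw [Submodule.span_le]
    rintro y ⟨m, rfl⟩
    refine ⟨wedge F (m 0) (m 1), wedge_mem_span b _ _, ?_⟩
    have hm : ![m 0, m 1] = m := by funext i; fin_cases i <;> rfl
    simp [wedge, expWedge, hm]
  have key : (⋀[F]^2 V : Submodule F (ExteriorAlgebra F V))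
      ≤ Submodule.map (Submodule.subtype _) N :=
    le_trans (le_of_eq (ιMulti_span_fixedDegree F 2).symm) key0
  obtain ⟨y, hy, hval⟩ := key hx
  have : y = ⟨x, hx⟩ := Subtype.ext hval
  rwa [← this]

def Pfin (g : ℕ) : Finset ((Fin g × Bool) × (Fin g × Bool)) :=
  Finset.univ.filter (fun pq => ordP pq.1 < ordP pq.2)

lemma mem_Pfin {pq : (Fin g × Bool) × (Fin g × Bool)} :
    pq ∈ Pfin g ↔ ordP pq.1 < ordP pq.2 := by
  simp [Pfin]

lemma exists_rep (x : ⋀[F]^2 V) : ∃ c : (Fin g × Bool) × (Fin g × Bool) → F,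
    x = ∑ pq ∈ Pfin g, c pq • wedge F (b pq.1) (b pq.2) := by
  rw [Pfin]
  have hx : x ∈ Submodule.span F (Set.range (kap (F := F) b)) := by
    rw [kap_span]; trivial
  obtain ⟨c, hc⟩ := (Submodule.mem_span_range_iff_exists_fun F).mp hx
  refine ⟨c, ?_⟩
  rw [← hc, Finset.sum_filter]
  refine Finset.sum_congr rfl fun pq _ => ?_
  by_cases h : ordP pq.1 < ordP pq.2 <;> simp [kap, h]


/-- Transvection machinery: for any `v` spanned (over `𝔽₂`) by the basis, we get an
operator `D` preserving any invariant subspace `W`, acting as `x∧y ↦ Q(y,v)•x∧v + Q(x,v)•v∧y`. -/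
lemma exists_D (hAlt : ∀ v, Q v v = 0)
    (hb1 : ∀ i j, Q (b (i, false)) (b (j, true)) = if i = j then 1 else 0)
    (hb2 : ∀ i j, Q (b (i, false)) (b (j, false)) = 0)
    (hb3 : ∀ i j, Q (b (i, true)) (b (j, true)) = 0)
    (W : Submodule F (⋀[F]^2 V))
    (hInv : ∀ A : V ≃ₗ[F] V, IsSpF2 Q b A →
      ∀ A₂ : (⋀[F]^2 V) →ₗ[F] ⋀[F]^2 V,
        (∀ w : Fin 2 → V, A₂ (expWedge F 2 w) = expWedge F 2 (fun t => A (w t))) →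
        Submodule.map A₂ W ≤ W)
    (S : Finset (Fin g × Bool)) :
    ∃ D : (⋀[F]^2 V) →ₗ[F] ⋀[F]^2 V,
      (∀ w ∈ W, D w ∈ W) ∧
      ∀ u u', D (wedge F u u') =
        Q u' (∑ q ∈ S, b q) • wedge F u (∑ q ∈ S, b q)
          + Q u (∑ q ∈ S, b q) • wedge F (∑ q ∈ S, b q) u' := by
  set v : V := ∑ q ∈ S, b q with hv
  have hQvv : Q v v = 0 := hAlt v
  set Tl : V →ₗ[F] V := LinearMap.id + LinearMap.smulRight (Q.flip v) v with hTl
  have hT : ∀ x, Tl x = x + Q x v • v := fun x => rfl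
  have hQT : ∀ x, Q (Tl x) v = Q x v := by
    intro x
    rw [hT]
    simp [hQvv]
  have hTT : ∀ x, Tl (Tl x) = x := by
    intro x
    rw [hT (Tl x), hQT, hT, add_assoc, addSelfM F, add_zero]
  set A : V ≃ₗ[F] V := LinearEquiv.ofLinear Tl Tl
    (by ext x; exact hTT x) (by ext x; exact hTT x) with hA
  have hAapp : ∀ x, A x = x + Q x v • v := fun x => hT x
  have hIso : ∀ x y, Q (A x) (A y) = Q x y := by
    intro x y
    rw [hAapp, hAapp]
    have hyx : Q v y = Q y v := Qsymm Q hAlt v y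
    simp only [map_add, map_smul, LinearMap.add_apply, LinearMap.smul_apply, hQvv,
      smul_eq_mul, hyx]
    ring_nf
    rw [CharTwo.two_eq_zero (R := F)]
    ring
  have hQbv : ∀ p, Q (b p) v = if mate p ∈ S then 1 else 0 := by
    intro p
    rw [hv, map_sum]
    rw [Finset.sum_congr rfl fun q _ => Qbb Q b hAlt hb1 hb2 hb3 p q]
    rw [Finset.sum_ite_eq' S (mate p) (fun _ => (1 : F))]
  have hLat : ∀ p : Fin g × Bool, ∃ S' : Finset (Fin g × Bool), A (b p) = ∑ q ∈ S', b q := by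
    intro p
    rw [hAapp, hQbv]
    by_cases hm : mate p ∈ S
    · rw [if_pos hm, one_smul]
      by_cases hp : p ∈ S
      · refine ⟨S.erase p, ?_⟩
        rw [hv, ← Finset.add_sum_erase S _ hp, ← add_assoc, addSelfM F, zero_add]
      · exact ⟨insert p S, by rw [hv, Finset.sum_insert hp]⟩
    · exact ⟨{p}, by rw [if_neg hm, zero_smul, add_zero, Finset.sum_singleton]⟩
  have hmaps : ∀ x ∈ (⋀[F]^2 V : Submodule F (ExteriorAlgebra F V)),
      ExteriorAlgebra.map Tl x ∈ (⋀[F]^2 V : Submodule F (ExteriorAlgebra F V)) :=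
    fun x hx => map_mem_pow Tl hx
  set A₂ : (⋀[F]^2 V) →ₗ[F] ⋀[F]^2 V :=
    ((ExteriorAlgebra.map Tl).toLinearMap).restrict hmaps with hA₂def
  have hA₂ : ∀ w : Fin 2 → V, A₂ (expWedge F 2 w) = expWedge F 2 (fun t => A (w t)) := by
    intro w
    apply Subtype.ext
    show (ExteriorAlgebra.map Tl) (ιMulti F 2 w) = ιMulti F 2 (fun t => A (w t))
    rw [map_apply_ιMulti]
    rfl
  have hA₂wedge : ∀ u u', A₂ (wedge F u u') = wedge F (Tl u) (Tl u') := by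
    intro u u'
    rw [wedge, hA₂]
    have : (fun t => A (![u, u'] t)) = ![Tl u, Tl u'] := by
      funext i; fin_cases i <;> rfl
    rw [this]
    rfl
  refine ⟨A₂ - (LinearMap.id : (⋀[F]^2 V) →ₗ[F] ⋀[F]^2 V), fun w hw => ?_, fun u u' => ?_⟩
  · have h1 : A₂ w ∈ W := hInv A ⟨hIso, hLat⟩ A₂ hA₂ ⟨w, hw, rfl⟩
    simpa using Submodule.sub_mem W h1 hw
  · have : (A₂ - (LinearMap.id : (⋀[F]^2 V) →ₗ[F] ⋀[F]^2 V)) (wedge F u u') = A₂ (wedge F u u') - wedge F u u' := rfl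
    rw [this, hA₂wedge, hT, hT]
    rw [wedge_add_left, wedge_add_right, wedge_add_right, wedge_smul_left, wedge_smul_right,
      wedge_smul_right, wedge_smul_left, wedge_self, smul_zero, smul_zero]
    abel


lemma Qbb' (hAlt : ∀ v, Q v v = 0)
    (hb1 : ∀ i j, Q (b (i, false)) (b (j, true)) = if i = j then 1 else 0)
    (hb2 : ∀ i j, Q (b (i, false)) (b (j, false)) = 0)
    (hb3 : ∀ i j, Q (b (i, true)) (b (j, true)) = 0)
    (p q : Fin g × Bool) :
    Q (b p) (b q) = if q.1 = p.1 ∧ q.2 = !p.2 then 1 else 0 := by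
  rw [Qbb Q b hAlt hb1 hb2 hb3]
  refine if_congr ?_ rfl rfl
  obtain ⟨i, s⟩ := p; obtain ⟨j, t⟩ := q
  simp [mate, Prod.ext_iff]

section Steps

variable (W : Submodule F (⋀[F]^2 V))
    (hInv : ∀ A : V ≃ₗ[F] V, IsSpF2 Q b A →
      ∀ A₂ : (⋀[F]^2 V) →ₗ[F] ⋀[F]^2 V,
        (∀ w : Fin 2 → V, A₂ (expWedge F 2 w) = expWedge F 2 (fun t => A (w t))) →
        Submodule.map A₂ W ≤ W)

include hAlt hb1 hb2 hb3 hInv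

lemma exists_D_single (r : Fin g × Bool) :
    ∃ D : (⋀[F]^2 V) →ₗ[F] ⋀[F]^2 V, (∀ w ∈ W, D w ∈ W) ∧
      ∀ u u', D (wedge F u u') =
        Q u' (b r) • wedge F u (b r) + Q u (b r) • wedge F (b r) u' := by
  obtain ⟨D, h1, h2⟩ := exists_D Q b hAlt hb1 hb2 hb3 W hInv {r}
  simp only [Finset.sum_singleton] at h2
  exact ⟨D, h1, h2⟩

lemma step_flip {p q : Fin g × Bool} (hpq : p.1 ≠ q.1)
    (hw : wedge F (b p) (b q) ∈ W) : wedge F (b (mate p)) (b q) ∈ W := by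
  obtain ⟨D, hmem, hform⟩ := exists_D_single Q hAlt b hb1 hb2 hb3 W hInv (mate p)
  have q1 : Q (b q) (b (mate p)) = 0 := by
    rw [Qbb' Q b hAlt hb1 hb2 hb3]
    exact if_neg (by rintro ⟨h1, -⟩; rw [mate_fst] at h1; exact hpq h1)
  have q2 : Q (b p) (b (mate p)) = 1 := by
    rw [Qbb' Q b hAlt hb1 hb2 hb3]
    exact if_pos (by simp [mate])
  have h := hform (b p) (b q)
  rw [q1, q2, zero_smul, one_smul, zero_add] at h
  have := hmem _ hw
  rwa [h] at this

lemma step_bools {i j : Fin g} (hij : i ≠ j) {s t : Bool}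
    (hw : wedge F (b (i, s)) (b (j, t)) ∈ W) (s' t' : Bool) :
    wedge F (b (i, s')) (b (j, t')) ∈ W := by
  have hflipL : ∀ s₀ t₀ : Bool, wedge F (b (i, s₀)) (b (j, t₀)) ∈ W →
      wedge F (b (i, !s₀)) (b (j, t₀)) ∈ W := fun s₀ t₀ hw₀ =>
    step_flip Q hAlt b hb1 hb2 hb3 W hInv (p := (i, s₀)) (q := (j, t₀)) hij hw₀
  have hflipR : ∀ s₀ t₀ : Bool, wedge F (b (i, s₀)) (b (j, t₀)) ∈ W →
      wedge F (b (i, s₀)) (b (j, !t₀)) ∈ W := by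
    intro s₀ t₀ hw₀
    rw [wedge_comm] at hw₀ ⊢
    exact step_flip Q hAlt b hb1 hb2 hb3 W hInv (p := (j, t₀)) (q := (i, s₀)) hij.symm hw₀
  have h1 : wedge F (b (i, s')) (b (j, t)) ∈ W := by
    rcases Bool.eq_or_eq_not s' s with h | h
    · rwa [h]
    · rw [h]; exact hflipL s t hw
  rcases Bool.eq_or_eq_not t' t with h | h
  · rwa [h]
  · rw [h]; exact hflipR s' t h1

lemma step_move {i j k : Fin g} {t : Bool} (hij : i ≠ j) (hki : k ≠ i) (hkj : k ≠ j)
    (hw : wedge F (b (i, true)) (b (j, t)) ∈ W) :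
    wedge F (b (k, true)) (b (j, t)) ∈ W := by
  obtain ⟨D, hmem, hform⟩ := exists_D Q b hAlt hb1 hb2 hb3 W hInv {(i, false), (k, false)}
  have hpairne : ((i, false) : Fin g × Bool) ≠ (k, false) := by
    simp [Prod.ext_iff, (Ne.symm hki : i ≠ k)]
  have hsum : ∑ q ∈ ({(i, false), (k, false)} : Finset (Fin g × Bool)), b q
      = b (i, false) + b (k, false) := Finset.sum_pair hpairne
  have q1 : Q (b (j, t)) (b (i, false) + b (k, false)) = 0 := by
    rw [map_add, Qbb' Q b hAlt hb1 hb2 hb3, Qbb' Q b hAlt hb1 hb2 hb3]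
    rw [if_neg (by simp [hij, hij.symm, Prod.ext_iff]), if_neg (by simp [hkj, hkj.symm, Prod.ext_iff]), add_zero]
  have q2 : Q (b (i, true)) (b (i, false) + b (k, false)) = 1 := by
    rw [map_add, Qbb' Q b hAlt hb1 hb2 hb3, Qbb' Q b hAlt hb1 hb2 hb3]
    rw [if_pos (by simp), if_neg (by simp [hki, hki.symm, Prod.ext_iff]), add_zero]
  have h := hform (b (i, true)) (b (j, t))
  rw [hsum, q1, q2, zero_smul, one_smul, zero_add, wedge_add_left] at h
  have h2 : wedge F (b (i, false)) (b (j, t)) + wedge F (b (k, false)) (b (j, t)) ∈ W :=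
    h ▸ hmem _ hw
  obtain ⟨D', hmem', hform'⟩ := exists_D_single Q hAlt b hb1 hb2 hb3 W hInv (k, true)
  have r1 : Q (b (j, t)) (b (k, true)) = 0 := by
    rw [Qbb' Q b hAlt hb1 hb2 hb3]; exact if_neg (by simp [hkj, hkj.symm, Prod.ext_iff])
  have r2 : Q (b (i, false)) (b (k, true)) = 0 := by
    rw [Qbb' Q b hAlt hb1 hb2 hb3]; exact if_neg (by simp [hki, hki.symm, Prod.ext_iff])
  have r3 : Q (b (k, false)) (b (k, true)) = 1 := by
    rw [Qbb' Q b hAlt hb1 hb2 hb3]; exact if_pos (by simp)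
  have h3 := hmem' _ h2
  rw [map_add, hform', hform', r1, r2, r3, zero_smul, zero_smul, one_smul, zero_add,
    zero_add, zero_smul, zero_add] at h3
  exact h3

lemma step_conn {a c : Fin g × Bool} (hac : a.1 ≠ c.1)
    (hw : wedge F (b a) (b c) ∈ W) :
    ∀ p q : Fin g × Bool, p.1 ≠ q.1 → wedge F (b p) (b q) ∈ W := by
  set P : Fin g → Fin g → Prop :=
    fun α γ => α ≠ γ ∧ ∀ s t, wedge F (b (α, s)) (b (γ, t)) ∈ W with hP
  have Pcomm : ∀ {α γ}, P α γ → P γ α := by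
    rintro α γ ⟨h, hm⟩
    exact ⟨h.symm, fun s t => by rw [wedge_comm]; exact hm t s⟩
  have Pmove : ∀ {α γ k}, k ≠ α → k ≠ γ → P α γ → P k γ := by
    rintro α γ k hka hkγ ⟨hαγ, hm⟩
    refine ⟨hkγ, fun s t => ?_⟩
    exact step_bools Q hAlt b hb1 hb2 hb3 W hInv hkγ
      (step_move Q hAlt b hb1 hb2 hb3 W hInv hαγ hka hkγ (hm true t)) s t
  have Pseed : P a.1 c.1 :=
    ⟨hac, fun s t => step_bools Q hAlt b hb1 hb2 hb3 W hInv hac hw s t⟩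
  intro p q hpq
  suffices h : P p.1 q.1 by exact h.2 p.2 q.2
  by_cases h1 : p.1 = a.1
  · by_cases h2 : q.1 = c.1
    · rw [h1, h2]; exact Pseed
    · have hja : q.1 ≠ a.1 := fun hc2 => hpq (h1.trans hc2.symm)
      rw [h1]
      exact Pcomm (Pmove h2 hja (Pcomm Pseed))
  · by_cases h2 : p.1 = c.1
    · by_cases h3 : q.1 = a.1
      · rw [h2, h3]; exact Pcomm Pseed
      · have hji : q.1 ≠ c.1 := fun hc2 => hpq (h2.trans hc2.symm)
        rw [h2]
        exact Pcomm (Pmove h3 hji Pseed)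
    · have hig : P p.1 c.1 := Pmove h1 h2 Pseed
      by_cases h3 : q.1 = c.1
      · rw [h3]; exact hig
      · by_cases h4 : q.1 = a.1
        · rw [h4]
          exact Pcomm (Pmove hac (Ne.symm h1) (Pcomm hig))
        · exact Pcomm (Pmove h3 hpq.symm (Pcomm hig))

lemma step_hyp (Hnm : ∀ p q : Fin g × Bool, p.1 ≠ q.1 → wedge F (b p) (b q) ∈ W)
    {i j : Fin g} (hij : i ≠ j) :
    wedge F (b (i, false)) (b (i, true)) + wedge F (b (j, false)) (b (j, true)) ∈ W := by
  obtain ⟨D, hmem, hform⟩ := exists_D Q b hAlt hb1 hb2 hb3 W hInv {(i, true), (j, true)}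
  have hpairne : ((i, true) : Fin g × Bool) ≠ (j, true) := by
    simp [Prod.ext_iff, hij]
  have hsum : ∑ q ∈ ({(i, true), (j, true)} : Finset (Fin g × Bool)), b q
      = b (i, true) + b (j, true) := Finset.sum_pair hpairne
  have q1 : Q (b (j, false)) (b (i, true) + b (j, true)) = 1 := by
    rw [map_add, Qbb' Q b hAlt hb1 hb2 hb3, Qbb' Q b hAlt hb1 hb2 hb3]
    rw [if_neg (by simp [hij, hij.symm, Prod.ext_iff]), if_pos (by simp), zero_add]
  have q2 : Q (b (i, false)) (b (i, true) + b (j, true)) = 1 := by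
    rw [map_add, Qbb' Q b hAlt hb1 hb2 hb3, Qbb' Q b hAlt hb1 hb2 hb3]
    rw [if_pos (by simp), if_neg (by simp [hij, hij.symm, Prod.ext_iff]), add_zero]
  have h := hform (b (i, false)) (b (j, false))
  rw [hsum, q1, q2, one_smul, one_smul, wedge_add_right, wedge_add_left] at h
  have hD := hmem _ (Hnm (i, false) (j, false) hij)
  rw [h] at hD
  have h1 : wedge F (b (i, false)) (b (j, true)) ∈ W := Hnm _ _ hij
  have h2 : wedge F (b (i, true)) (b (j, false)) ∈ W := Hnm _ _ hij
  have hsub := Submodule.sub_mem W (Submodule.sub_mem W hD h1) h2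
  have hcomm : wedge F (b (j, true)) (b (j, false))
      = wedge F (b (j, false)) (b (j, true)) := wedge_comm _ _
  have hEq : wedge F (b (i, false)) (b (i, true)) + wedge F (b (j, false)) (b (j, true))
      = wedge F (b (i, false)) (b (i, true)) + wedge F (b (i, false)) (b (j, true))
        + (wedge F (b (i, true)) (b (j, false)) + wedge F (b (j, true)) (b (j, false)))
        - wedge F (b (i, false)) (b (j, true)) - wedge F (b (i, true)) (b (j, false)) := by
    rw [hcomm]; abel
  rw [hEq]
  exact hsub

end Steps
lemma filter_mate_eq :
    (Pfin g).filter (fun pq => pq.1.1 = pq.2.1)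
      = Finset.univ.image (fun i : Fin g => ((((i, false), (i, true))) :
          (Fin g × Bool) × (Fin g × Bool))) := by
  ext ⟨⟨i, s⟩, ⟨j, t⟩⟩
  simp only [Finset.mem_filter, mem_Pfin, Finset.mem_image, Finset.mem_univ, true_and,
    Prod.mk.injEq, ordP]
  constructor
  · rintro ⟨hlt, rfl⟩
    refine ⟨i, ⟨rfl, ?_⟩, ⟨rfl, ?_⟩⟩ <;> cases s <;> cases t <;>
      simp_all [Bool.toNat]
  · rintro ⟨k, ⟨rfl, rfl⟩, ⟨rfl, rfl⟩⟩
    simp [Bool.toNat]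

section Master

variable (hg : 2 ≤ g)
    (δ₂ : (⋀[F]^2 V) →ₗ[F] F)
    (hδ₂ : ∀ u v : V, δ₂ (expWedge F 2 ![u, v]) = Q u v)
    (W : Submodule F (⋀[F]^2 V))
    (hInv : ∀ A : V ≃ₗ[F] V, IsSpF2 Q b A →
      ∀ A₂ : (⋀[F]^2 V) →ₗ[F] ⋀[F]^2 V,
        (∀ w : Fin 2 → V, A₂ (expWedge F 2 w) = expWedge F 2 (fun t => A (w t))) →
        Submodule.map A₂ W ≤ W)

include hg hAlt hb1 hb2 hb3 hδ₂ hInv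

omit hg hInv in
lemma delta_wedge (u v : V) : δ₂ (wedge F u v) = Q u v := hδ₂ u v

omit hg hInv in
lemma delta_wedge_offdiag {p q : Fin g × Bool} (h : p.1 ≠ q.1) :
    δ₂ (wedge F (b p) (b q)) = 0 := by
  rw [delta_wedge Q hAlt b hb1 hb2 hb3 δ₂ hδ₂, Qbb' Q b hAlt hb1 hb2 hb3]
  exact if_neg (fun hc => h hc.1.symm)

lemma ker_le_W (Hnm : ∀ p q : Fin g × Bool, p.1 ≠ q.1 → wedge F (b p) (b q) ∈ W) :
    LinearMap.ker δ₂ ≤ W := by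
  intro x hx
  have hker : δ₂ x = 0 := hx
  obtain ⟨c, hc⟩ := exists_rep b x
  have hsplit : x = (∑ pq ∈ (Pfin g).filter (fun pq => pq.1.1 = pq.2.1), c pq • wedge F (b pq.1) (b pq.2))
      + ∑ pq ∈ (Pfin g).filter (fun pq => ¬ pq.1.1 = pq.2.1), c pq • wedge F (b pq.1) (b pq.2) := by
    rw [hc, Finset.sum_filter_add_sum_filter_not]
  set z := ∑ pq ∈ (Pfin g).filter (fun pq => ¬ pq.1.1 = pq.2.1), c pq • wedge F (b pq.1) (b pq.2) with hz
  have hzW : z ∈ W := by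
    refine Submodule.sum_mem _ fun pq hpq => ?_
    have := (Finset.mem_filter.mp hpq).2
    exact Submodule.smul_mem _ _ (Hnm _ _ this)
  have hzker : δ₂ z = 0 := by
    rw [hz, map_sum]
    refine Finset.sum_eq_zero fun pq hpq => ?_
    have := (Finset.mem_filter.mp hpq).2
    rw [map_smul, delta_wedge_offdiag Q hAlt b hb1 hb2 hb3 δ₂ hδ₂ this, smul_zero]
  set d : Fin g → F := fun i => c ((i, false), (i, true)) with hd
  have hmatesum : (∑ pq ∈ (Pfin g).filter (fun pq => pq.1.1 = pq.2.1), c pq • wedge F (b pq.1) (b pq.2))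
      = ∑ i : Fin g, d i • wedge F (b (i, false)) (b (i, true)) := by
    rw [filter_mate_eq]
    rw [Finset.sum_image (fun i _ j _ hij => by
      simpa [Prod.ext_iff] using congrArg (fun pq => pq.1.1) hij)]
  set y := ∑ i : Fin g, d i • wedge F (b (i, false)) (b (i, true)) with hy
  have hxy : x = y + z := by rw [hsplit, hmatesum]
  have hyd : δ₂ y = ∑ i : Fin g, d i := by
    rw [hy, map_sum]
    refine Finset.sum_congr rfl fun i _ => ?_
    rw [map_smul, delta_wedge Q hAlt b hb1 hb2 hb3 δ₂ hδ₂, Qbb' Q b hAlt hb1 hb2 hb3,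
      if_pos (by simp), smul_eq_mul, mul_one]
  have hdsum : ∑ i : Fin g, d i = 0 := by
    rw [← hyd]
    have : δ₂ x = δ₂ y + δ₂ z := by rw [hxy, map_add]
    rw [hker, hzker, add_zero] at this
    exact this.symm
  -- fix an anchor index
  have hg0 : 0 < g := lt_of_lt_of_le (by norm_num) hg
  set i0 : Fin g := ⟨0, hg0⟩ with hi0
  set w0 := wedge F (b (i0, false)) (b (i0, true)) with hw0
  have hyW : y ∈ W := by
    have hkey : y = ∑ i : Fin g, d i •
        (wedge F (b (i, false)) (b (i, true)) + w0) := by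
      rw [Finset.sum_congr rfl fun i _ => smul_add (d i) _ w0, Finset.sum_add_distrib,
        ← Finset.sum_smul, hdsum, zero_smul, add_zero, hy]
    rw [hkey]
    refine Submodule.sum_mem _ fun i _ => Submodule.smul_mem _ _ ?_
    by_cases hi : i = i0
    · rw [hi, hw0, addSelfM F]
      exact Submodule.zero_mem _
    · exact step_hyp Q hAlt b hb1 hb2 hb3 W hInv Hnm hi
  rw [hxy]
  exact Submodule.add_mem _ hyW hzW

omit hg hInv in
lemma delta_omega {ω : ⋀[F]^2 V}
    (hω : ω = ∑ i : Fin g, expWedge F 2 ![b (i, false), b (i, true)]) :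
    δ₂ ω = (g : F) := by
  rw [hω, map_sum]
  have h1 : ∀ i : Fin g, δ₂ (expWedge F 2 ![b (i, false), b (i, true)]) = 1 := fun i => by
    rw [hδ₂, hb1, if_pos rfl]
  rw [Finset.sum_congr rfl fun i _ => h1 i, Finset.sum_const, Finset.card_univ,
    Fintype.card_fin, nsmul_eq_mul, mul_one]

lemma master {ω : ⋀[F]^2 V}
    (hω : ω = ∑ i : Fin g, expWedge F 2 ![b (i, false), b (i, true)])
    {w : ⋀[F]^2 V} (hw : w ∈ W) (hwker : δ₂ w = 0)
    (hne : ∀ d : F, w ≠ d • ω) : LinearMap.ker δ₂ ≤ W := by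
  obtain ⟨c, hc⟩ := exists_rep b w
  by_cases hOff : ∃ pq ∈ Pfin g, pq.1.1 ≠ pq.2.1 ∧ c pq ≠ 0
  · obtain ⟨⟨p₀, q₀⟩, hP, hneq, hc0⟩ := hOff
    have hne0 : p₀ ≠ q₀ := fun h => hneq (congrArg Prod.fst h)
    have e1 : ∀ q' : Fin g × Bool, Q (b q') (b (mate p₀)) = if q' = p₀ then 1 else 0 := by
      intro q'
      rw [Qbb Q b hAlt hb1 hb2 hb3]
      exact if_congr ⟨fun h => (mate_inj h).symm, fun h => by rw [h]⟩ rfl rfl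
    have e2 : ∀ q' : Fin g × Bool, Q (b q') (b (mate q₀)) = if q' = q₀ then 1 else 0 := by
      intro q'
      rw [Qbb Q b hAlt hb1 hb2 hb3]
      exact if_congr ⟨fun h => (mate_inj h).symm, fun h => by rw [h]⟩ rfl rfl
    obtain ⟨D1, hm1, hf1⟩ := exists_D_single Q hAlt b hb1 hb2 hb3 W hInv (mate p₀)
    obtain ⟨D2, hm2, hf2⟩ := exists_D_single Q hAlt b hb1 hb2 hb3 W hInv (mate q₀)
    have hmr : (if (mate p₀ : Fin g × Bool) = q₀ then (1 : F) else 0) = 0 :=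
      if_neg (fun hcon => hneq (by rw [← hcon, mate_fst]))
    have key : ∀ p q : Fin g × Bool, D2 (D1 (wedge F (b p) (b q)))
        = ((if q = p₀ then (1:F) else 0) * (if p = q₀ then 1 else 0))
              • wedge F (b (mate q₀)) (b (mate p₀))
          + ((if p = p₀ then (1:F) else 0) * (if q = q₀ then 1 else 0))
              • wedge F (b (mate p₀)) (b (mate q₀)) := by
      intro p q
      rw [hf1 (b p) (b q), e1 q, e1 p]
      rw [map_add, map_smul, map_smul, hf2, hf2]
      rw [e2 (mate p₀), e2 p, e2 q, hmr]
      rw [zero_smul, zero_smul, zero_add, add_zero, smul_smul, smul_smul]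
    have hzW : D2 (D1 w) ∈ W := hm2 _ (hm1 _ hw)
    have hcomp : D2 (D1 w) = c (p₀, q₀) • wedge F (b (mate p₀)) (b (mate q₀)) := by
      rw [hc, map_sum, map_sum]
      rw [Finset.sum_congr rfl fun pq _ => by rw [map_smul, map_smul, key pq.1 pq.2]]
      rw [Finset.sum_eq_single_of_mem (p₀, q₀) hP ?side]
      · rw [if_neg hne0, if_neg (Ne.symm hne0), if_pos rfl, if_pos rfl]
        rw [mul_zero, zero_smul, zero_add, mul_one, one_smul]
      case side =>
        intro pq hPmem hne'
        obtain ⟨p, q⟩ := pq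
        have hord : ordP p < ordP q := mem_Pfin.mp hPmem
        have hord0 : ordP p₀ < ordP q₀ := mem_Pfin.mp hP
        have hterm1 : (if q = p₀ then (1:F) else 0) * (if p = q₀ then 1 else 0) = 0 := by
          by_cases h1 : q = p₀
          · by_cases h2 : p = q₀
            · exfalso; rw [h1, h2] at hord; omega
            · rw [if_neg h2, mul_zero]
          · rw [if_neg h1, zero_mul]
        have hterm2 : (if p = p₀ then (1:F) else 0) * (if q = q₀ then 1 else 0) = 0 := by
          by_cases h1 : p = p₀
          · by_cases h2 : q = q₀
            · exact absurd (by rw [h1, h2]) hne'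
            · rw [if_neg h2, mul_zero]
          · rw [if_neg h1, zero_mul]
        rw [hterm1, hterm2, zero_smul, zero_smul, add_zero, smul_zero]
    rw [hcomp] at hzW
    have hseed : wedge F (b (mate p₀)) (b (mate q₀)) ∈ W := by
      have := Submodule.smul_mem W (c (p₀, q₀))⁻¹ hzW
      rwa [smul_smul, inv_mul_cancel₀ hc0, one_smul] at this
    have Hnm := step_conn Q hAlt b hb1 hb2 hb3 W hInv
      (a := mate p₀) (c := mate q₀) (by simpa [mate_fst] using hneq) hseed
    exact ker_le_W Q hAlt b hb1 hb2 hb3 hg δ₂ hδ₂ W hInv Hnm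
  · push_neg at hOff
    set d : Fin g → F := fun i => c ((i, false), (i, true)) with hd
    have hw' : w = ∑ i : Fin g, d i • wedge F (b (i, false)) (b (i, true)) := by
      rw [hc, ← Finset.sum_filter_add_sum_filter_not (Pfin g) (fun pq => pq.1.1 = pq.2.1)]
      have hz0 : ∑ pq ∈ (Pfin g).filter (fun pq => ¬ pq.1.1 = pq.2.1),
          c pq • wedge F (b pq.1) (b pq.2) = 0 := by
        refine Finset.sum_eq_zero fun pq hpq => ?_
        obtain ⟨hmem, hnd⟩ := Finset.mem_filter.mp hpq
        rw [hOff pq hmem hnd, zero_smul]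
      rw [hz0, add_zero, filter_mate_eq, Finset.sum_image (fun i _ j _ hij => by
        simpa [Prod.ext_iff] using congrArg (fun pq => pq.1.1) hij)]
    have hdsum : ∑ i : Fin g, d i = 0 := by
      rw [← hwker, hw', map_sum]
      refine (Finset.sum_congr rfl fun i _ => ?_).symm
      rw [map_smul, delta_wedge Q hAlt b hb1 hb2 hb3 δ₂ hδ₂, Qbb' Q b hAlt hb1 hb2 hb3,
        if_pos (by simp), smul_eq_mul, mul_one]
    by_cases hEq : ∀ i' j' : Fin g, d i' = d j'
    · exfalso
      have hg0 : 0 < g := lt_of_lt_of_le (by norm_num) hg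
      apply hne (d ⟨0, hg0⟩)
      rw [hw', hω, Finset.smul_sum]
      exact Finset.sum_congr rfl fun i _ => by rw [hEq i ⟨0, hg0⟩]; rfl
    · push_neg at hEq
      obtain ⟨i, j, hdij⟩ := hEq
      have hij : i ≠ j := fun h => hdij (by rw [h])
      obtain ⟨D, hmem, hform⟩ := exists_D Q b hAlt hb1 hb2 hb3 W hInv {(i, false), (j, false)}
      have hpairne : ((i, false) : Fin g × Bool) ≠ (j, false) := by
        simp [Prod.ext_iff, hij]
      have hsum : ∑ q ∈ ({(i, false), (j, false)} : Finset (Fin g × Bool)), b q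
          = b (i, false) + b (j, false) := Finset.sum_pair hpairne
      set v : V := b (i, false) + b (j, false) with hv
      have qA : ∀ k : Fin g, Q (b (k, true)) v
          = (if k = i then (1:F) else 0) + (if k = j then 1 else 0) := by
        intro k
        rw [hv, map_add, Qbb' Q b hAlt hb1 hb2 hb3, Qbb' Q b hAlt hb1 hb2 hb3]
        congr 1
        · exact if_congr (by simp [eq_comm]) rfl rfl
        · exact if_congr (by simp [eq_comm]) rfl rfl
      have qB : ∀ k : Fin g, Q (b (k, false)) v = 0 := by
        intro k
        rw [hv, map_add, Qbb' Q b hAlt hb1 hb2 hb3, Qbb' Q b hAlt hb1 hb2 hb3]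
        rw [if_neg (by simp), if_neg (by simp), add_zero]
      have hDw : D w = (d i + d j) • wedge F (b (i, false)) (b (j, false)) := by
        rw [hw', map_sum]
        have hterm : ∀ k : Fin g, D (d k • wedge F (b (k, false)) (b (k, true)))
            = (if k = i then (1:F) else 0) • (d k • wedge F (b (k, false)) v)
              + (if k = j then (1:F) else 0) • (d k • wedge F (b (k, false)) v) := by
          intro k
          rw [map_smul, hform, hsum, qA k, qB k, zero_smul, add_zero, add_smul,
            smul_add, smul_comm (d k), smul_comm (d k)]
        rw [Finset.sum_congr rfl fun k _ => hterm k, Finset.sum_add_distrib]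
        have hs1 : ∑ k : Fin g, (if k = i then (1:F) else 0) • (d k • wedge F (b (k, false)) v)
            = d i • wedge F (b (i, false)) v := by
          simp only [ite_smul, one_smul, zero_smul]
          rw [Finset.sum_ite_eq' Finset.univ i (fun k => d k • wedge F (b (k, false)) v),
            if_pos (Finset.mem_univ i)]
        have hs2 : ∑ k : Fin g, (if k = j then (1:F) else 0) • (d k • wedge F (b (k, false)) v)
            = d j • wedge F (b (j, false)) v := by
          simp only [ite_smul, one_smul, zero_smul]
          rw [Finset.sum_ite_eq' Finset.univ j (fun k => d k • wedge F (b (k, false)) v),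
            if_pos (Finset.mem_univ j)]
        rw [hs1, hs2]
        have hv1 : wedge F (b (i, false)) v = wedge F (b (i, false)) (b (j, false)) := by
          rw [hv, wedge_add_right, wedge_self, zero_add]
        have hv2 : wedge F (b (j, false)) v = wedge F (b (i, false)) (b (j, false)) := by
          rw [hv, wedge_add_right, wedge_self, add_zero, wedge_comm]
        rw [hv1, hv2, ← add_smul]
      have hzW : D w ∈ W := hmem _ hw
      rw [hDw] at hzW
      have hcoef : d i + d j ≠ 0 := fun h => hdij (eq_of_add_eq_zeroF h)
      have hseed : wedge F (b (i, false)) (b (j, false)) ∈ W := by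
        have := Submodule.smul_mem W (d i + d j)⁻¹ hzW
        rwa [smul_smul, inv_mul_cancel₀ hcoef, one_smul] at this
      have Hnm := step_conn Q hAlt b hb1 hb2 hb3 W hInv
        (a := ((i, false) : Fin g × Bool)) (c := ((j, false) : Fin g × Bool)) hij hseed
      exact ker_le_W Q hAlt b hb1 hb2 hb3 hg δ₂ hδ₂ W hInv Hnm

end Master

end Main

end Aux


/-- for `V` a `2g`-dimensional symplectic vector space over a field `F` of
characteristic `2`, `g ≥ 2`: if `g` is odd then `ker δ₂ ⊆ ⋀²V` has no nonzero proper
subspace invariant under `Sp_{2g}(𝔽₂)`; if `g` is even then `⟨ω⟩ ⊆ ker δ₂` and every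
`Sp_{2g}(𝔽₂)`-invariant subspace strictly between them is one of the two, i.e. the quotient
`ker δ₂ / ⟨ω⟩` is irreducible. -/
theorem stmt8 (F V : Type*) [Field F] [CharP F 2] [AddCommGroup V] [Module F V]
    (g : ℕ) (hg : 2 ≤ g)
    (Q : V →ₗ[F] V →ₗ[F] F)
    (hAlt : ∀ v, Q v v = 0)
    (b : Module.Basis (Fin g × Bool) F V)
    (hb1 : ∀ i j, Q (b (i, false)) (b (j, true)) = if i = j then 1 else 0)
    (hb2 : ∀ i j, Q (b (i, false)) (b (j, false)) = 0)
    (hb3 : ∀ i j, Q (b (i, true)) (b (j, true)) = 0)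
    (δ₂ : (⋀[F]^2 V) →ₗ[F] F)
    (hδ₂ : ∀ u v : V, δ₂ (expWedge F 2 ![u, v]) = Q u v)
    (ω : ⋀[F]^2 V)
    (hω : ω = ∑ i : Fin g, expWedge F 2 ![b (i, false), b (i, true)]) :
    (Odd g →
      ∀ W : Submodule F (⋀[F]^2 V), W ≤ LinearMap.ker δ₂ →
        (∀ A : V ≃ₗ[F] V, IsSpF2 Q b A →
          ∀ A₂ : (⋀[F]^2 V) →ₗ[F] ⋀[F]^2 V,
            (∀ w : Fin 2 → V, A₂ (expWedge F 2 w) = expWedge F 2 (fun t => A (w t))) →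
            Submodule.map A₂ W ≤ W) →
        W = ⊥ ∨ W = LinearMap.ker δ₂) ∧
    (Even g →
      ω ∈ LinearMap.ker δ₂ ∧
      ∀ W : Submodule F (⋀[F]^2 V), (F ∙ ω) ≤ W → W ≤ LinearMap.ker δ₂ →
        (∀ A : V ≃ₗ[F] V, IsSpF2 Q b A →
          ∀ A₂ : (⋀[F]^2 V) →ₗ[F] ⋀[F]^2 V,
            (∀ w : Fin 2 → V, A₂ (expWedge F 2 w) = expWedge F 2 (fun t => A (w t))) →
            Submodule.map A₂ W ≤ W) →
        W = (F ∙ ω) ∨ W = LinearMap.ker δ₂) := by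
  constructor
  · intro hodd W hWle hInv
    by_cases hbot : W = ⊥
    · exact Or.inl hbot
    · right
      obtain ⟨w, hwW, hw0⟩ := Submodule.ne_bot_iff W |>.mp hbot
      refine le_antisymm hWle ?_
      have hwker : δ₂ w = 0 := hWle hwW
      have hgF : (g : F) = 1 := by
        obtain ⟨m, hm⟩ := hodd
        rw [hm]
        push_cast
        rw [CharTwo.two_eq_zero]
        ring
      have hne : ∀ dd : F, w ≠ dd • ω := by
        intro dd hd
        apply hw0
        have h1 : δ₂ w = dd * (g : F) := by
          rw [hd, map_smul, delta_omega Q hAlt b hb1 hb2 hb3 δ₂ hδ₂ hω, smul_eq_mul]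
        rw [hwker, hgF, mul_one] at h1
        rw [hd, ← h1, zero_smul]
      exact master Q hAlt b hb1 hb2 hb3 hg δ₂ hδ₂ W hInv hω hwW hwker hne
  · intro heven
    have hgF : (g : F) = 0 := by
      obtain ⟨m, hm⟩ := heven
      rw [hm]
      push_cast
      exact addSelfF _
    have hωker : ω ∈ LinearMap.ker δ₂ := by
      rw [LinearMap.mem_ker, delta_omega Q hAlt b hb1 hb2 hb3 δ₂ hδ₂ hω, hgF]
    refine ⟨hωker, ?_⟩
    intro W hspan hWle hInv
    by_cases hW : W = (F ∙ ω)
    · exact Or.inl hW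
    · right
      refine le_antisymm hWle ?_
      have hnotle : ¬ W ≤ (F ∙ ω) := fun hle => hW (le_antisymm hle hspan)
      obtain ⟨w, hwW, hwnot⟩ := SetLike.not_le_iff_exists.mp hnotle
      have hne : ∀ dd : F, w ≠ dd • ω := fun dd hd => hwnot (by
        rw [hd]
        exact Submodule.smul_mem _ _ (Submodule.mem_span_singleton_self ω))
      exact master Q hAlt b hb1 hb2 hb3 hg δ₂ hδ₂ W hInv hω hwW (hWle hwW) hne
end

section
/- For g = 3 and V = 𝔽₂^6 with symplectic basis, the contraction δ₅ : ⋀⁵V → ⋀³V is injective, so Im(δ₅) ≅ ⋀⁵V ≅ V* as Sp₆(𝔽₂)-modules, and Im(δ₅) has dimension 6. -/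
set_option maxRecDepth 8000
set_option maxHeartbeats 1000000

open ExteriorAlgebra

section Aux

variable {V : Type*} [AddCommGroup V] [Module (ZMod 2) V]

/-- `expWedge` as an alternating map. -/
noncomputable def wedgeAlt (n : ℕ) : V [⋀^Fin n]→ₗ[ZMod 2] (⋀[ZMod 2]^n V) :=
  (ExteriorAlgebra.ιMulti (ZMod 2) n).codRestrict (⋀[ZMod 2]^n V)
    (fun w => ExteriorAlgebra.ιMulti_range (ZMod 2) n ⟨w, rfl⟩)

lemma wedgeAlt_apply (n : ℕ) (w : Fin n → V) : wedgeAlt n w = expWedge (ZMod 2) n w := rfl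

/-- A coordinate (minor-determinant) alternating functional on `V^3`. -/
noncomputable def coordAlt (X : Module.Basis (Fin 6) (ZMod 2) V) (t : Fin 3 → Fin 6) :
    V [⋀^Fin 3]→ₗ[ZMod 2] ZMod 2 :=
  (Matrix.detRowAlternating (n := Fin 3) (R := ZMod 2)).compLinearMap
    (LinearMap.pi fun j => X.coord (t j))

/-- The induced linear functional on `⋀³V`. -/
noncomputable def phiF (X : Module.Basis (Fin 6) (ZMod 2) V) (t : Fin 3 → Fin 6) :
    (⋀[ZMod 2]^3 V) →ₗ[ZMod 2] ZMod 2 :=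
  (ExteriorAlgebra.liftAlternating
      (Function.update (fun i => (0 : V [⋀^Fin i]→ₗ[ZMod 2] ZMod 2)) 3 (coordAlt X t))).comp
    (Submodule.subtype _)

lemma phiF_expWedge (X : Module.Basis (Fin 6) (ZMod 2) V) (t : Fin 3 → Fin 6) (w : Fin 3 → V) :
    phiF X t (expWedge (ZMod 2) 3 w) = coordAlt X t w := by
  simp only [phiF, LinearMap.comp_apply, Submodule.subtype_apply, expWedge,
    ExteriorAlgebra.liftAlternating_apply_ιMulti, Function.update_self]

lemma coordAlt_basis (X : Module.Basis (Fin 6) (ZMod 2) V) (t s : Fin 3 → Fin 6) :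
    coordAlt X t (fun j => X (s j)) =
      Matrix.det (Matrix.of fun j j' => if s j = t j' then (1 : ZMod 2) else 0) := by
  simp only [coordAlt, AlternatingMap.compLinearMap_apply, Matrix.detRowAlternating,
    AlternatingMap.coe_mk]
  congr 1
  ext j j'
  simp [LinearMap.pi_apply, Module.Basis.coord_apply, Module.Basis.repr_self, Finsupp.single_apply]

lemma e_eq (e : Fin 5 → Fin 5 → Fin 3 → Fin 5)
    (he : ∀ i j : Fin 5, i < j →
      StrictMono (e i j) ∧ Set.range (e i j) = ({i, j} : Set (Fin 5))ᶜ)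
    (i j : Fin 5) (hij : i < j) (g : Fin 3 → Fin 5) (hg : StrictMono g)
    (hrange : ∀ x : Fin 5, (∃ y, g y = x) ↔ ¬(x = i ∨ x = j)) : e i j = g := by
  have inst : WellFoundedLT (Fin 3) := inferInstance
  have hr : Set.range g = ({i, j} : Set (Fin 5))ᶜ := by
    simp only [Set.ext_iff, Set.mem_range, Set.mem_compl_iff, Set.mem_insert_iff,
      Set.mem_singleton_iff]
    exact hrange
  exact (@StrictMono.range_inj (Fin 3) (Fin 5) _ _ inst _ _ (he i j hij).1 hg).mp
    ((he i j hij).2.trans hr.symm)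

/-- Every 5-fold wedge of vectors lies in the span of the six basis wedges. -/
lemma expWedge_mem_span (X : Module.Basis (Fin 6) (ZMod 2) V) (w : Fin 5 → V) :
    expWedge (ZMod 2) 5 w ∈ Submodule.span (ZMod 2)
      (Set.range fun k : Fin 6 => expWedge (ZMod 2) 5 (fun i => X (Fin.succAbove k i))) := by
  set S := Submodule.span (ZMod 2)
      (Set.range fun k : Fin 6 => expWedge (ZMod 2) 5 (fun i => X (Fin.succAbove k i))) with hS
  have hgen : ∀ r : Fin 5 → Fin 6, expWedge (ZMod 2) 5 (fun i => X (r i)) ∈ S := by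
    intro r
    by_cases hr : Function.Injective r
    · -- find the missing index
      have hnot : ¬ Function.Surjective r := by
        intro hsurj
        have := Fintype.card_le_of_surjective r hsurj
        simp at this
      rw [Function.Surjective] at hnot
      push_neg at hnot
      obtain ⟨k, hk⟩ := hnot
      have hrange : Set.range r = Set.range (Fin.succAbove k) := by
        rw [Fin.range_succAbove]
        have h1 : Set.range r ⊆ {k}ᶜ := by
          rintro x ⟨i, rfl⟩
          exact fun h => hk i h
        have h2 : (Set.range r).toFinset = ({k}ᶜ : Set (Fin 6)).toFinset := by
          apply Finset.eq_of_subset_of_card_le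
          · intro x hx
            rw [Set.mem_toFinset] at hx ⊢
            exact h1 hx
          · rw [Set.toFinset_range, Set.toFinset_compl, Set.toFinset_singleton]
            rw [Finset.card_image_of_injective _ hr]
            simp [Finset.card_compl]
        have := congrArg (fun s : Finset (Fin 6) => (s : Set (Fin 6))) h2
        simpa [Set.coe_toFinset] using this
      -- build the permutation
      have hinj' : Function.Injective (Fin.succAbove k) := Fin.succAbove_right_injective
      let σ : Equiv.Perm (Fin 5) :=
        (Equiv.ofInjective r hr).trans
          ((Equiv.setCongr hrange).trans (Equiv.ofInjective _ hinj').symm)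
      have hσ : ∀ i, Fin.succAbove k (σ i) = r i := by
        intro i
        show Fin.succAbove k ((Equiv.ofInjective _ hinj').symm _) = r i
        rw [Equiv.apply_ofInjective_symm hinj']
        rfl
      have hcomp : (fun i => X (r i)) = (fun i => X (Fin.succAbove k i)) ∘ σ := by
        funext i
        simp [Function.comp, hσ i]
      rw [← wedgeAlt_apply, hcomp, AlternatingMap.map_perm]
      have hmem : wedgeAlt 5 (fun i => X (Fin.succAbove k i)) ∈ S := by
        rw [wedgeAlt_apply]
        exact Submodule.subset_span ⟨k, rfl⟩
      rcases Int.units_eq_one_or (Equiv.Perm.sign σ) with h | h <;> rw [h]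
      · simpa using hmem
      · simpa using S.neg_mem hmem
    · have hXr : ¬ Function.Injective (fun i => X (r i)) := by
        intro h
        exact hr fun i j hij => h (by simp [hij])
      rw [← wedgeAlt_apply, (wedgeAlt 5).map_eq_zero_of_not_injective _ hXr]
      exact S.zero_mem
  -- expand w in the basis
  have hrepr : w = fun i => ∑ j, X.repr (w i) j • X j :=
    funext fun i => (X.sum_repr (w i)).symm
  rw [← wedgeAlt_apply, hrepr]
  rw [show (wedgeAlt (V := V) 5) (fun i => ∑ j, X.repr (w i) j • X j)
      = ∑ r : Fin 5 → Fin 6, (wedgeAlt 5) (fun i => X.repr (w i) (r i) • X (r i)) from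
    (wedgeAlt (V := V) 5).toMultilinearMap.map_sum (fun i j => X.repr (w i) j • X j)]
  apply Submodule.sum_mem
  intro r _
  rw [show (wedgeAlt (V := V) 5) (fun i => X.repr (w i) (r i) • X (r i))
      = (∏ i, X.repr (w i) (r i)) • (wedgeAlt 5) (fun i => X (r i)) from
    (wedgeAlt (V := V) 5).toMultilinearMap.map_smul_univ _ _]
  exact S.smul_mem _ (by rw [wedgeAlt_apply]; exact hgen r)

end Aux

/-- for `g = 3` and `V = 𝔽₂⁶` with symplectic basis (blocks `{2r, 2r+1}`), the
contraction `δ₅ : ⋀⁵V → ⋀³V` is injective, so `Im δ₅ ≅ ⋀⁵V ≅ V*` and `Im δ₅` has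
dimension `6`. -/
theorem stmt13 (V : Type*) [AddCommGroup V] [Module (ZMod 2) V]
    (Q : V →ₗ[ZMod 2] V →ₗ[ZMod 2] ZMod 2)
    (X : Module.Basis (Fin 6) (ZMod 2) V)
    (hX : ∀ i j : Fin 6,
      Q (X i) (X j) = if (i.val / 2 = j.val / 2 ∧ i ≠ j) then 1 else 0)
    (e : Fin 5 → Fin 5 → Fin 3 → Fin 5)
    (he : ∀ i j : Fin 5, i < j →
      StrictMono (e i j) ∧ Set.range (e i j) = ({i, j} : Set (Fin 5))ᶜ)
    (δ₅ : (⋀[ZMod 2]^5 V) →ₗ[ZMod 2] ⋀[ZMod 2]^3 V)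
    (hδ₅ : ∀ w : Fin 5 → V,
      δ₅ (expWedge (ZMod 2) 5 w) =
        ∑ i', ∑ j', if i' < j' then
          (Q (w i') (w j')) • expWedge (ZMod 2) 3 (w ∘ e i' j') else 0) :
    Function.Injective δ₅ ∧
    Module.finrank (ZMod 2) (LinearMap.range δ₅) = 6 ∧
    Nonempty ((LinearMap.range δ₅) ≃ₗ[ZMod 2] ⋀[ZMod 2]^5 V) ∧
    Nonempty ((LinearMap.range δ₅) ≃ₗ[ZMod 2] Module.Dual (ZMod 2) V) := by
  -- the four relevant `e` functions
  have he01 : e 0 1 = ![2,3,4] := e_eq e he 0 1 (by decide) _ (by decide) (by decide)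
  have he12 : e 1 2 = ![0,3,4] := e_eq e he 1 2 (by decide) _ (by decide) (by decide)
  have he23 : e 2 3 = ![0,1,4] := e_eq e he 2 3 (by decide) _ (by decide) (by decide)
  have he34 : e 3 4 = ![0,1,2] := e_eq e he 3 4 (by decide) _ (by decide) (by decide)
  have hd0 : δ₅ (expWedge (ZMod 2) 5 (fun i => X (![1,2,3,4,5] i))) =
      expWedge (ZMod 2) 3 (fun m => X (![1,4,5] m)) +
      expWedge (ZMod 2) 3 (fun m => X (![1,2,3] m)) := by
    have hc : ∀ i' j' : Fin 5, Q (X (![1,2,3,4,5] i')) (X (![1,2,3,4,5] j')) =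
        if (i' = 1 ∧ j' = 2) ∨ (i' = 3 ∧ j' = 4) ∨ (j' = 1 ∧ i' = 2) ∨ (j' = 3 ∧ i' = 4) then 1 else 0 := by
      intro i' j'
      rw [hX]
      revert i' j'
      decide
    rw [hδ₅]
    simp only [hc]
    simp only [Fin.sum_univ_five, Fin.reduceLT, Fin.reduceEq, and_true, true_and, and_false,
      false_and, or_true, true_or, or_false, false_or, if_true, if_false, ite_true, ite_false,
      zero_smul, one_smul, add_zero, zero_add, not_false_eq_true, not_true_eq_false]
    rw [he12, he34]
    congr 1
  have hd1 : δ₅ (expWedge (ZMod 2) 5 (fun i => X (![0,2,3,4,5] i))) =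
      expWedge (ZMod 2) 3 (fun m => X (![0,4,5] m)) +
      expWedge (ZMod 2) 3 (fun m => X (![0,2,3] m)) := by
    have hc : ∀ i' j' : Fin 5, Q (X (![0,2,3,4,5] i')) (X (![0,2,3,4,5] j')) =
        if (i' = 1 ∧ j' = 2) ∨ (i' = 3 ∧ j' = 4) ∨ (j' = 1 ∧ i' = 2) ∨ (j' = 3 ∧ i' = 4) then 1 else 0 := by
      intro i' j'
      rw [hX]
      revert i' j'
      decide
    rw [hδ₅]
    simp only [hc]
    simp only [Fin.sum_univ_five, Fin.reduceLT, Fin.reduceEq, and_true, true_and, and_false,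
      false_and, or_true, true_or, or_false, false_or, if_true, if_false, ite_true, ite_false,
      zero_smul, one_smul, add_zero, zero_add, not_false_eq_true, not_true_eq_false]
    rw [he12, he34]
    congr 1
  have hd2 : δ₅ (expWedge (ZMod 2) 5 (fun i => X (![0,1,3,4,5] i))) =
      expWedge (ZMod 2) 3 (fun m => X (![3,4,5] m)) +
      expWedge (ZMod 2) 3 (fun m => X (![0,1,3] m)) := by
    have hc : ∀ i' j' : Fin 5, Q (X (![0,1,3,4,5] i')) (X (![0,1,3,4,5] j')) =
        if (i' = 0 ∧ j' = 1) ∨ (i' = 3 ∧ j' = 4) ∨ (j' = 0 ∧ i' = 1) ∨ (j' = 3 ∧ i' = 4) then 1 else 0 := by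
      intro i' j'
      rw [hX]
      revert i' j'
      decide
    rw [hδ₅]
    simp only [hc]
    simp only [Fin.sum_univ_five, Fin.reduceLT, Fin.reduceEq, and_true, true_and, and_false,
      false_and, or_true, true_or, or_false, false_or, if_true, if_false, ite_true, ite_false,
      zero_smul, one_smul, add_zero, zero_add, not_false_eq_true, not_true_eq_false]
    rw [he01, he34]
    congr 1
  have hd3 : δ₅ (expWedge (ZMod 2) 5 (fun i => X (![0,1,2,4,5] i))) =
      expWedge (ZMod 2) 3 (fun m => X (![2,4,5] m)) +
      expWedge (ZMod 2) 3 (fun m => X (![0,1,2] m)) := by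
    have hc : ∀ i' j' : Fin 5, Q (X (![0,1,2,4,5] i')) (X (![0,1,2,4,5] j')) =
        if (i' = 0 ∧ j' = 1) ∨ (i' = 3 ∧ j' = 4) ∨ (j' = 0 ∧ i' = 1) ∨ (j' = 3 ∧ i' = 4) then 1 else 0 := by
      intro i' j'
      rw [hX]
      revert i' j'
      decide
    rw [hδ₅]
    simp only [hc]
    simp only [Fin.sum_univ_five, Fin.reduceLT, Fin.reduceEq, and_true, true_and, and_false,
      false_and, or_true, true_or, or_false, false_or, if_true, if_false, ite_true, ite_false,
      zero_smul, one_smul, add_zero, zero_add, not_false_eq_true, not_true_eq_false]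
    rw [he01, he34]
    congr 1
  have hd4 : δ₅ (expWedge (ZMod 2) 5 (fun i => X (![0,1,2,3,5] i))) =
      expWedge (ZMod 2) 3 (fun m => X (![2,3,5] m)) +
      expWedge (ZMod 2) 3 (fun m => X (![0,1,5] m)) := by
    have hc : ∀ i' j' : Fin 5, Q (X (![0,1,2,3,5] i')) (X (![0,1,2,3,5] j')) =
        if (i' = 0 ∧ j' = 1) ∨ (i' = 2 ∧ j' = 3) ∨ (j' = 0 ∧ i' = 1) ∨ (j' = 2 ∧ i' = 3) then 1 else 0 := by
      intro i' j'
      rw [hX]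
      revert i' j'
      decide
    rw [hδ₅]
    simp only [hc]
    simp only [Fin.sum_univ_five, Fin.reduceLT, Fin.reduceEq, and_true, true_and, and_false,
      false_and, or_true, true_or, or_false, false_or, if_true, if_false, ite_true, ite_false,
      zero_smul, one_smul, add_zero, zero_add, not_false_eq_true, not_true_eq_false]
    rw [he01, he23]
    congr 1
  have hd5 : δ₅ (expWedge (ZMod 2) 5 (fun i => X (![0,1,2,3,4] i))) =
      expWedge (ZMod 2) 3 (fun m => X (![2,3,4] m)) +
      expWedge (ZMod 2) 3 (fun m => X (![0,1,4] m)) := by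
    have hc : ∀ i' j' : Fin 5, Q (X (![0,1,2,3,4] i')) (X (![0,1,2,3,4] j')) =
        if (i' = 0 ∧ j' = 1) ∨ (i' = 2 ∧ j' = 3) ∨ (j' = 0 ∧ i' = 1) ∨ (j' = 2 ∧ i' = 3) then 1 else 0 := by
      intro i' j'
      rw [hX]
      revert i' j'
      decide
    rw [hδ₅]
    simp only [hc]
    simp only [Fin.sum_univ_five, Fin.reduceLT, Fin.reduceEq, and_true, true_and, and_false,
      false_and, or_true, true_or, or_false, false_or, if_true, if_false, ite_true, ite_false,
      zero_smul, one_smul, add_zero, zero_add, not_false_eq_true, not_true_eq_false]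
    rw [he01, he23]
    congr 1
  set A : Fin 6 → Fin 3 → Fin 6 :=
    ![![1,4,5],![0,4,5],![3,4,5],![2,4,5],![2,3,5],![2,3,4]] with hA
  set B : Fin 6 → Fin 3 → Fin 6 :=
    ![![1,2,3],![0,2,3],![0,1,3],![0,1,2],![0,1,5],![0,1,4]] with hB
  set ω : Fin 6 → (⋀[ZMod 2]^5 V) :=
    fun k => expWedge (ZMod 2) 5 (fun i => X (Fin.succAbove k i)) with hω
  have hωt : ∀ k : Fin 6, ω k =
      expWedge (ZMod 2) 5 (fun i => X (![![1,2,3,4,5],![0,2,3,4,5],![0,1,3,4,5],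
        ![0,1,2,4,5],![0,1,2,3,5],![0,1,2,3,4]] k i)) := by
    have hsA : ∀ (k : Fin 6) (i : Fin 5), Fin.succAbove k i =
        ![![1,2,3,4,5],![0,2,3,4,5],![0,1,3,4,5],![0,1,2,4,5],![0,1,2,3,5],![0,1,2,3,4]] k i := by
      decide
    intro k
    have h : (fun i => X (Fin.succAbove k i)) = fun i => X (![![1,2,3,4,5],![0,2,3,4,5],
        ![0,1,3,4,5],![0,1,2,4,5],![0,1,2,3,5],![0,1,2,3,4]] k i) :=
      funext fun i => congrArg X (hsA k i)
    show expWedge (ZMod 2) 5 (fun i => X (Fin.succAbove k i)) = _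
    rw [h]
  have hδω : ∀ k : Fin 6, δ₅ (ω k) = expWedge (ZMod 2) 3 (fun m => X (A k m)) +
      expWedge (ZMod 2) 3 (fun m => X (B k m)) := by
    intro k
    rw [hωt k]
    fin_cases k
    exacts [hd0, hd1, hd2, hd3, hd4, hd5]
  -- evaluation of the functionals on the images
  have hval : ∀ m k : Fin 6, phiF X (A m) (δ₅ (ω k)) = if k = m then 1 else 0 := by
    intro m k
    rw [hδω k, map_add, phiF_expWedge, phiF_expWedge, coordAlt_basis, coordAlt_basis]
    simp only [hA, hB]
    revert m k
    decide
  -- span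
  have hspan : Submodule.span (ZMod 2) (Set.range ω) = ⊤ := by
    rw [eq_top_iff]
    rintro ⟨x, hx⟩ -
    have hle : Submodule.span (ZMod 2) (Set.range (ιMulti (ZMod 2) 5 (M := V))) ≤
        (Submodule.span (ZMod 2) (Set.range ω)).map (Submodule.subtype _) := by
      rw [Submodule.span_le]
      rintro _ ⟨v, rfl⟩
      exact ⟨expWedge (ZMod 2) 5 v, expWedge_mem_span X v, rfl⟩
    rw [ExteriorAlgebra.ιMulti_span_fixedDegree] at hle
    obtain ⟨s, hs, hsx⟩ := hle hx
    have : (⟨x, hx⟩ : ⋀[ZMod 2]^5 V) = s := Subtype.ext hsx.symm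
    rw [this]
    exact hs
  -- coefficients vanish
  have hcoeff : ∀ c : Fin 6 → ZMod 2, δ₅ (∑ k, c k • ω k) = 0 → ∀ m, c m = 0 := by
    intro c hc m
    have h1 : phiF X (A m) (δ₅ (∑ k, c k • ω k)) = 0 := by rw [hc]; simp
    simp only [map_sum, map_smul] at h1
    simp only [hval m] at h1
    simpa [Finset.sum_ite_eq', smul_eq_mul] using h1
  -- kernel is trivial
  have hker : ∀ x : ⋀[ZMod 2]^5 V, δ₅ x = 0 → x = 0 := by
    intro x hx
    have hx' : x ∈ Submodule.span (ZMod 2) (Set.range ω) := hspan ▸ Submodule.mem_top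
    obtain ⟨c, hc⟩ := (Submodule.mem_span_range_iff_exists_fun (ZMod 2)).mp hx'
    have hc0 : ∀ m, c m = 0 := hcoeff c (by rw [hc]; exact hx)
    rw [← hc]
    simp [hc0]
  have hinj : Function.Injective δ₅ := by
    rw [← LinearMap.ker_eq_bot]
    exact (Submodule.eq_bot_iff _).mpr fun x hx => hker x hx
  -- linear independence of ω
  have hindep : LinearIndependent (ZMod 2) ω := by
    rw [Fintype.linearIndependent_iff]
    intro c hc
    exact hcoeff c (by rw [hc, map_zero])
  -- basis of ⋀⁵V
  let b : Module.Basis (Fin 6) (ZMod 2) (⋀[ZMod 2]^5 V) := Module.Basis.mk hindep (by rw [hspan])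
  haveI : FiniteDimensional (ZMod 2) (⋀[ZMod 2]^5 V) := Module.Finite.of_basis b
  have hfr5 : Module.finrank (ZMod 2) (⋀[ZMod 2]^5 V) = 6 := by
    rw [Module.finrank_eq_card_basis b, Fintype.card_fin]
  let eq1 : (⋀[ZMod 2]^5 V) ≃ₗ[ZMod 2] LinearMap.range δ₅ := LinearEquiv.ofInjective δ₅ hinj
  haveI : FiniteDimensional (ZMod 2) (LinearMap.range δ₅) := Module.Finite.equiv eq1
  have hfrr : Module.finrank (ZMod 2) (LinearMap.range δ₅) = 6 := by
    rw [← eq1.finrank_eq, hfr5]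
  haveI : FiniteDimensional (ZMod 2) V := Module.Finite.of_basis X
  have hfrV : Module.finrank (ZMod 2) V = 6 := by
    rw [Module.finrank_eq_card_basis X, Fintype.card_fin]
  have hfrD : Module.finrank (ZMod 2) (Module.Dual (ZMod 2) V) = 6 := by
    rw [Subspace.dual_finrank_eq, hfrV]
  refine ⟨hinj, hfrr, ⟨eq1.symm⟩, ?_⟩
  exact FiniteDimensional.nonempty_linearEquiv_of_finrank_eq (by rw [hfrr, hfrD])
end

section
/- Let F be a field of characteristic p > 0 and V an n-dimensional F-vector space. The contraction κ : V* ⊗ ⋀²V → V, f ⊗ (v∧w) ↦ f(v)w − f(w)v, is a surjective GL(V)-equivariant linear map (for n ≥ 2), and the map τ : V → V* ⊗ ⋀²V defined on a basis by τ(e_k) = Σ_{i=1}^n e_i* ⊗ (e_k ∧ e_i) is GL(V)-equivariant and satisfies κ(τ(v)) = −(n−1)·v for all v ∈ V. In particular Im(τ) ⊆ ker(κ) if and only if n ≡ 1 (mod p). -/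
open TensorProduct ExteriorAlgebra

section Aux

variable {F V : Type*} [Field F] [AddCommGroup V] [Module F V]

lemma expWedge_coe (n : ℕ) (w : Fin n → V) :
    (expWedge F n w : ExteriorAlgebra F V) = ExteriorAlgebra.ιMulti F n w := rfl

lemma upd_zero (a b c : V) : Function.update ![a, b] (0 : Fin 2) c = ![c, b] := by
  funext i; fin_cases i <;> simp

lemma upd_one (a b c : V) : Function.update ![a, b] (1 : Fin 2) c = ![a, c] := by
  funext i; fin_cases i <;> simp

lemma fin_two_eta (w : Fin 2 → V) : ![w 0, w 1] = w := by
  funext i; fin_cases i <;> rfl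

/-- The wedge of two vectors, as a bilinear map into the second exterior power. -/
noncomputable def wB (F : Type*) (V : Type*) [Field F] [AddCommGroup V] [Module F V] :
    V →ₗ[F] V →ₗ[F] ⋀[F]^2 V :=
  LinearMap.mk₂ F (fun v u => expWedge F 2 ![v, u])
    (fun v v' u => Subtype.ext (by
      simp only [expWedge_coe, Submodule.coe_add, ← upd_zero v u (v + v')]
      rw [AlternatingMap.map_update_add, upd_zero, upd_zero]))
    (fun c v u => Subtype.ext (by
      simp only [expWedge_coe, SetLike.val_smul, ← upd_zero v u (c • v)]
      rw [AlternatingMap.map_update_smul, upd_zero]))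
    (fun v u u' => Subtype.ext (by
      simp only [expWedge_coe, Submodule.coe_add, ← upd_one v u (u + u')]
      rw [AlternatingMap.map_update_add, upd_one, upd_one]))
    (fun c v u => Subtype.ext (by
      simp only [expWedge_coe, SetLike.val_smul, ← upd_one v u (c • u)]
      rw [AlternatingMap.map_update_smul, upd_one]))

@[simp] lemma wB_apply (v u : V) : wB F V v u = expWedge F 2 ![v, u] := rfl

/-- Two linear maps out of `⋀²V` agreeing on wedges are equal. -/
lemma exteriorPower_ext {N : Type*} [AddCommGroup N] [Module F N] (n : ℕ)
    {φ ψ : (⋀[F]^n V) →ₗ[F] N}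
    (h : ∀ w : Fin n → V, φ (expWedge F n w) = ψ (expWedge F n w)) : φ = ψ := by
  refine LinearMap.ext fun y => ?_
  have hy : (y : ExteriorAlgebra F V) ∈
      Submodule.map (⋀[F]^n V).subtype (LinearMap.eqLocus φ ψ) := by
    have hmem : (y : ExteriorAlgebra F V) ∈
        Submodule.span F (Set.range (ExteriorAlgebra.ιMulti F n (M := V))) := by
      rw [ExteriorAlgebra.ιMulti_span_fixedDegree]; exact y.2
    refine Submodule.span_le.mpr ?_ hmem
    rintro _ ⟨w, rfl⟩
    exact ⟨expWedge F n w, h w, rfl⟩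
  obtain ⟨s, hs, hsv⟩ := hy
  have hsy : s = y := Subtype.ext hsv
  rw [← hsy]; exact hs

/-- The coevaluation element `∑ eᵢ* ⊗ eᵢ` is independent of the basis. -/
lemma coev_indep {ι : Type*} [Fintype ι] [DecidableEq ι] (e f : Module.Basis ι F V) :
    ∑ i, e.coord i ⊗ₜ[F] e i = ∑ i, f.coord i ⊗ₜ[F] f i := by
  have hinj : Function.Injective (dualTensorHom F V V) := by
    have := (dualTensorHomEquivOfBasis (N := V) e).injective
    rwa [show ⇑(dualTensorHomEquivOfBasis (N := V) e) = ⇑(dualTensorHom F V V) from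
      funext fun x => dualTensorHomEquivOfBasis_apply e x] at this
  apply hinj
  have key : ∀ b : Module.Basis ι F V,
      dualTensorHom F V V (∑ i, b.coord i ⊗ₜ[F] b i) = LinearMap.id := by
    intro b
    apply b.ext
    intro j
    simp only [map_sum, LinearMap.sum_apply, dualTensorHom_apply, LinearMap.id_coe, id_eq,
      Module.Basis.coord_apply]
    exact b.sum_repr (b j)
  rw [key e, key f]

/-- `∑ eᵢ* ⊗ (v ∧ eᵢ)` is independent of the basis. -/
lemma S_indep {ι : Type*} [Fintype ι] [DecidableEq ι] (e f : Module.Basis ι F V) (v : V) :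
    ∑ i, e.coord i ⊗ₜ[F] (wB F V v (e i)) = ∑ i, f.coord i ⊗ₜ[F] (wB F V v (f i)) := by
  have h : ∀ b : Module.Basis ι F V, ∑ i, b.coord i ⊗ₜ[F] (wB F V v (b i)) =
      LinearMap.lTensor (Module.Dual F V) (wB F V v) (∑ i, b.coord i ⊗ₜ[F] b i) := by
    intro b
    rw [map_sum]
    simp [LinearMap.lTensor_tmul]
  rw [h e, h f, coev_indep e f]

end Aux

/-- over a field `F` of characteristic `p > 0` and `V` of dimension `n ≥ 2`,
the contraction `κ : V* ⊗ ⋀²V → V`, `f ⊗ (v∧w) ↦ f(v)w − f(w)v`, is surjective and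
`GL(V)`-equivariant; the map `τ : V → V* ⊗ ⋀²V`, `e_k ↦ Σᵢ eᵢ* ⊗ (e_k ∧ eᵢ)`, is
`GL(V)`-equivariant and satisfies `κ (τ v) = −(n−1)·v`; in particular
`Im τ ⊆ ker κ ↔ n ≡ 1 (mod p)`. -/
theorem stmt16 (F V : Type*) [Field F] (p : ℕ) (hp : p ≠ 0) [CharP F p]
    [AddCommGroup V] [Module F V] [FiniteDimensional F V]
    (n : ℕ) (hn : 2 ≤ n) (hdim : Module.finrank F V = n)
    (e : Module.Basis (Fin n) F V)
    (κ : (Module.Dual F V ⊗[F] ⋀[F]^2 V) →ₗ[F] V)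
    (hκ : ∀ (f : Module.Dual F V) (v w : V),
      κ (f ⊗ₜ expWedge F 2 ![v, w]) = f v • w - f w • v)
    (τ : V →ₗ[F] (Module.Dual F V ⊗[F] ⋀[F]^2 V))
    (hτ : ∀ k : Fin n, τ (e k) = ∑ i, e.coord i ⊗ₜ[F] expWedge F 2 ![e k, e i]) :
    Function.Surjective κ ∧
    (∀ g : V ≃ₗ[F] V,
      ∀ A₂ : (⋀[F]^2 V) →ₗ[F] ⋀[F]^2 V,
        (∀ w : Fin 2 → V, A₂ (expWedge F 2 w) = expWedge F 2 (fun t => g (w t))) →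
        (∀ x : Module.Dual F V ⊗[F] ⋀[F]^2 V,
          κ (TensorProduct.map (g.symm.toLinearMap.dualMap) A₂ x) = g (κ x)) ∧
        (∀ v : V,
          τ (g v) = TensorProduct.map (g.symm.toLinearMap.dualMap) A₂ (τ v))) ∧
    (∀ v : V, κ (τ v) = (-((n : F) - 1)) • v) ∧
    (LinearMap.range τ ≤ LinearMap.ker κ ↔ n ≡ 1 [MOD p]) := by
  classical
  -- `τ` in closed form
  have hτ' : ∀ v : V, τ v = ∑ i, e.coord i ⊗ₜ[F] (wB F V v (e i)) := by
    have hT : τ = ∑ i, (TensorProduct.mk F (Module.Dual F V) (⋀[F]^2 V) (e.coord i)).comp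
        ((wB F V).flip (e i)) := by
      apply e.ext
      intro k
      rw [hτ k]
      simp [TensorProduct.mk_apply, LinearMap.flip_apply]
    intro v
    rw [hT]
    simp [TensorProduct.mk_apply, LinearMap.flip_apply]
  -- the indices 0 and 1
  set i0 : Fin n := ⟨0, by omega⟩ with hi0
  set i1 : Fin n := ⟨1, by omega⟩ with hi1
  have hne : i0 ≠ i1 := by simp [hi0, hi1, Fin.ext_iff]
  have hcoord_self : ∀ i : Fin n, e.coord i (e i) = 1 := by
    intro i; simp [Module.Basis.coord_apply]
  have hcoord_ne : ∀ i j : Fin n, i ≠ j → e.coord i (e j) = 0 := by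
    intro i j hij
    simp [Module.Basis.coord_apply, Module.Basis.repr_self, Finsupp.single_apply, hij.symm]
  -- Part 3 first
  have part3 : ∀ v : V, κ (τ v) = (-((n : F) - 1)) • v := by
    intro v
    rw [hτ' v, map_sum]
    have hterm : ∀ i : Fin n, κ (e.coord i ⊗ₜ[F] (wB F V v (e i))) =
        e.coord i v • e i - e.coord i (e i) • v := by
      intro i; rw [wB_apply]; exact hκ (e.coord i) v (e i)
    calc ∑ i, κ (e.coord i ⊗ₜ[F] (wB F V v (e i)))
        = ∑ i, (e.coord i v • e i - e.coord i (e i) • v) := by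
          exact Finset.sum_congr rfl fun i _ => hterm i
      _ = (∑ i, e.coord i v • e i) - ∑ i : Fin n, e.coord i (e i) • v := by
          rw [Finset.sum_sub_distrib]
      _ = v - (n : F) • v := by
          congr 1
          · simpa [Module.Basis.coord_apply] using e.sum_repr v
          · simp only [hcoord_self, one_smul]
            rw [Finset.sum_const, Finset.card_univ, Fintype.card_fin,
              ← Nat.cast_smul_eq_nsmul F]
      _ = (-((n : F) - 1)) • v := by
          rw [neg_sub, sub_smul, one_smul]
  refine ⟨?_, ?_, part3, ?_⟩
  · -- surjectivity
    intro v
    refine ⟨e.coord i0 ⊗ₜ expWedge F 2 ![e i0, v] +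
      (e.coord i0 v) • (e.coord i1 ⊗ₜ expWedge F 2 ![e i1, e i0]), ?_⟩
    rw [map_add, map_smul, hκ, hκ, hcoord_self, hcoord_self, one_smul, one_smul,
      hcoord_ne i1 i0 (Ne.symm hne), zero_smul, sub_zero]
    abel
  · -- equivariance
    intro g A₂ hA
    have hA' : ∀ v u : V, A₂ (wB F V v u) = wB F V (g v) (g u) := by
      intro v u
      rw [wB_apply, wB_apply, hA ![v, u]]
      congr 1
      funext t; fin_cases t <;> rfl
    constructor
    · -- κ equivariance
      intro x
      induction x using TensorProduct.induction_on with
      | zero => simp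
      | tmul f y =>
        have key : (κ ∘ₗ (TensorProduct.map (g.symm.toLinearMap.dualMap) A₂) ∘ₗ
            TensorProduct.mk F (Module.Dual F V) (⋀[F]^2 V) f) =
            (g.toLinearMap ∘ₗ κ ∘ₗ TensorProduct.mk F (Module.Dual F V) (⋀[F]^2 V) f) := by
          apply exteriorPower_ext 2
          intro w
          have hw : ![w 0, w 1] = w := fin_two_eta w
          simp only [LinearMap.comp_apply, TensorProduct.mk_apply, TensorProduct.map_tmul]
          rw [← hw, hA ![w 0, w 1]]
          have : (fun t => g (![w 0, w 1] t)) = ![g (w 0), g (w 1)] := by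
            funext t; fin_cases t <;> rfl
          rw [this, hκ, hκ]
          simp [LinearMap.dualMap_apply]
        simpa using LinearMap.congr_fun key y
      | add a b ha hb => simp [map_add, ha, hb]
    · -- τ equivariance
      intro v
      rw [hτ' (g v), hτ' v, map_sum]
      simp only [TensorProduct.map_tmul, hA']
      have hcoord : ∀ i : Fin n, g.symm.toLinearMap.dualMap (e.coord i) = (e.map g).coord i := by
        intro i
        ext x
        simp [Module.Basis.coord_apply, Module.Basis.map_repr, LinearMap.dualMap_apply]
      have hmap : ∀ i : Fin n, g (e i) = (e.map g) i := by
        intro i; simp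
      calc ∑ i, e.coord i ⊗ₜ[F] (wB F V (g v) (e i))
          = ∑ i, (e.map g).coord i ⊗ₜ[F] (wB F V (g v) ((e.map g) i)) := S_indep e (e.map g) (g v)
        _ = ∑ i, g.symm.toLinearMap.dualMap (e.coord i) ⊗ₜ[F] (wB F V (g v) (g (e i))) := by
            refine Finset.sum_congr rfl fun i _ => ?_
            rw [hcoord i, hmap i]
  · -- the congruence
    constructor
    · intro h
      have h0 : κ (τ (e i0)) = 0 := h (LinearMap.mem_range_self τ (e i0))
      rw [part3 (e i0)] at h0
      rcases smul_eq_zero.mp h0 with hs | hv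
      · have : (n : F) = ((1 : ℕ) : F) := by
          have h1 := sub_eq_zero.mp (neg_eq_zero.mp hs)
          simpa using h1
        exact (CharP.natCast_eq_natCast F p).mp this
      · exact absurd hv (e.ne_zero i0)
    · intro h
      have hs : (-((n : F) - 1)) = 0 := by
        have : (n : F) = ((1 : ℕ) : F) := CharP.natCast_eq_natCast' F p h
        push_cast at this
        rw [this]; ring
      rintro x ⟨v, rfl⟩
      rw [LinearMap.mem_ker, part3 v, hs, zero_smul]
end
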